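/- arXiv:2107.14113 — 6 statements merged into one kernel-verified Lean document; each statement's English description precedes it below -/
import Mathlib

section
/- Let (ξ_n) be a sequence of R^d-valued random variables on a probability space with sup_n |ξ_n| < ∞ almost surely. Then there exists a sequence η_n of convex combinations η_n ∈ conv{ξ_n, ξ_{n+1}, ...} (formed ω-wise with measurable weights) that converges almost surely to some R^d-valued random variable η. -/
open MeasureTheory Filter Set

open Topology



lemma tail_hull_limit {H : Type*} [NormedAddCommGroup H] [InnerProductSpace ℝ H]
    [CompleteSpace H] (x : ℕ → H) (C : ℝ) (hC : ∀ n, ‖x n‖ ≤ C) :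
    ∃ y : H, ∀ n, y ∈ closure (convexHull ℝ {p | ∃ k, n ≤ k ∧ p = x k}) := by
  set S : ℕ → Set H := fun n => closure (convexHull ℝ {p | ∃ k, n ≤ k ∧ p = x k}) with hS
  have hSconv : ∀ n, Convex ℝ (S n) := fun n => (convex_convexHull ℝ _).closure
  have hSclosed : ∀ n, IsClosed (S n) := fun n => isClosed_closure
  have hSmem : ∀ n, x n ∈ S n := fun n =>
    subset_closure (subset_convexHull ℝ _ ⟨n, le_refl n, rfl⟩)
  have hSmono : ∀ {n m : ℕ}, n ≤ m → S m ⊆ S n := by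
    intro n m h
    exact closure_mono (convexHull_mono (fun p ⟨k, hk, he⟩ => ⟨k, h.trans hk, he⟩))
  have hproj : ∀ n, ∃ v ∈ S n, ‖(0 : H) - v‖ = ⨅ w : S n, ‖(0 : H) - w‖ := fun n =>
    exists_norm_eq_iInf_of_complete_convex ⟨x n, hSmem n⟩ (hSclosed n).isComplete (hSconv n) 0
  choose y hyS hy using hproj
  set δ : ℕ → ℝ := fun n => ⨅ w : S n, ‖(0 : H) - w‖ with hδ
  have hnorm : ∀ n, ‖y n‖ = δ n := by
    intro n
    have := hy n
    rwa [zero_sub, norm_neg] at this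
  have hδle : ∀ n, ∀ w ∈ S n, δ n ≤ ‖w‖ := by
    intro n w hw
    have : δ n ≤ ‖(0 : H) - (⟨w, hw⟩ : S n)‖ :=
      ciInf_le ⟨0, Set.forall_mem_range.2 fun _ => norm_nonneg _⟩ _
    simpa using this
  have hδ0 : ∀ n, 0 ≤ δ n := fun n => (norm_nonneg (y n)).trans_eq (hnorm n)
  have hδmono : Monotone δ := by
    intro n m h
    calc δ n ≤ ‖y m‖ := hδle n _ (hSmono h (hyS m))
    _ = δ m := hnorm m
  have hδbdd : ∀ n, δ n ≤ C := fun n =>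
    (hδle n _ (hSmem n)).trans (hC n)
  set L : ℝ := ⨆ n, δ n with hL
  have hδL : ∀ n, δ n ≤ L := fun n =>
    le_ciSup ⟨C, Set.forall_mem_range.2 hδbdd⟩ n
  have htend : Tendsto δ atTop (𝓝 L) :=
    tendsto_atTop_ciSup hδmono ⟨C, Set.forall_mem_range.2 hδbdd⟩
  -- Cauchy sequence via parallelogram law
  have key : ∀ N n m, N ≤ n → N ≤ m → ‖y n - y m‖ ^ 2 ≤ 4 * (L ^ 2 - δ N ^ 2) := by
    intro N n m hn hm
    have hmid : (1/2 : ℝ) • (y n + y m) ∈ S N := by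
      have := (hSconv N) (hSmono hn (hyS n)) (hSmono hm (hyS m))
        (by norm_num : (0:ℝ) ≤ 1/2) (by norm_num : (0:ℝ) ≤ 1/2) (by norm_num)
      rwa [smul_add]
    have h1 : δ N ≤ (1/2 : ℝ) * ‖y n + y m‖ := by
      have := hδle N _ hmid
      rwa [norm_smul, Real.norm_eq_abs, abs_of_pos (by norm_num : (0:ℝ) < 1/2)] at this
    have hpar := parallelogram_law_with_norm ℝ (y n) (y m)
    have hyn : ‖y n‖ = δ n := hnorm n
    have hym : ‖y m‖ = δ m := hnorm m
    have hnL : δ n ≤ L := hδL n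
    have hmL : δ m ≤ L := hδL m
    have hN0 : 0 ≤ δ N := hδ0 N
    have hn0 : 0 ≤ δ n := hδ0 n
    have hm0 : 0 ≤ δ m := hδ0 m
    nlinarith [norm_nonneg (y n + y m), h1, hpar]
  have hcauchy : CauchySeq y := by
    refine cauchySeq_of_le_tendsto_0 (fun N => Real.sqrt (4 * (L ^ 2 - δ N ^ 2))) ?_ ?_
    · intro n m N hn hm
      rw [dist_eq_norm]
      have h2 := key N n m hn hm
      have := Real.sqrt_le_sqrt h2
      rwa [Real.sqrt_sq (norm_nonneg _)] at this
    · have : Tendsto (fun N => 4 * (L ^ 2 - δ N ^ 2)) atTop (𝓝 (4 * (L ^ 2 - L ^ 2))) :=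
        (tendsto_const_nhds.mul ((tendsto_const_nhds.sub ((htend.pow 2)))))
      have h0 : Tendsto (fun N => 4 * (L ^ 2 - δ N ^ 2)) atTop (𝓝 0) := by simpa using this
      simpa [Real.sqrt_zero] using h0.sqrt
  obtain ⟨z, hz⟩ := cauchySeq_tendsto_of_complete hcauchy
  refine ⟨z, fun n => ?_⟩
  refine (hSclosed n).mem_of_tendsto hz ?_
  filter_upwards [eventually_ge_atTop n] with m hm
  exact hSmono hm (hyS m)
lemma Lp_coeFn_finset_sum {Ω : Type*} [MeasurableSpace Ω] {μ : Measure Ω}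
    {E : Type*} [NormedAddCommGroup E] {ι : Type*} (t : Finset ι)
    (f : ι → Lp E 2 μ) :
    ⇑(∑ i ∈ t, f i) =ᵐ[μ] fun ω => ∑ i ∈ t, f i ω := by
  classical
  induction t using Finset.induction_on with
  | empty => simp only [Finset.sum_empty]; exact Lp.coeFn_zero E 2 μ
  | insert a s hnotmem ih =>
    rw [Finset.sum_insert hnotmem]
    filter_upwards [Lp.coeFn_add (f a) (∑ i ∈ s, f i), ih] with ω h1 h2
    rw [Finset.sum_insert hnotmem, h1]
    simp only [Pi.add_apply]
    rw [h2]

lemma perM {Ω : Type*} [MeasurableSpace Ω] (μ : Measure Ω) [IsFiniteMeasure μ]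
    {E : Type*} [NormedAddCommGroup E] [InnerProductSpace ℝ E] [CompleteSpace E]
    [MeasurableSpace E] [BorelSpace E] [SecondCountableTopology E]
    (ζ : ℕ → Ω → E) (hζ : ∀ n, Measurable (ζ n))
    (M : ℝ) (hbd : ∀ᵐ ω ∂μ, ∀ n, ‖ζ n ω‖ ≤ M) :
    ∃ (θ : ℕ → Ω → E) (yl : Ω → E),
      (∀ n, Measurable (θ n)) ∧
      (∀ n ω, θ n ω ∈ convexHull ℝ {p | ∃ k, n ≤ k ∧ p = ζ k ω}) ∧
      ∀ᵐ ω ∂μ, Tendsto (fun n => θ n ω) atTop (𝓝 (yl ω)) := by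
  classical
  have hmem : ∀ n, MemLp (ζ n) 2 μ := fun n =>
    MemLp.of_bound (hζ n).aestronglyMeasurable M (hbd.mono fun ω h => h n)
  set X : ℕ → Lp E 2 μ := fun n => (hmem n).toLp (ζ n) with hX
  have hXcoe : ∀ n, ⇑(X n) =ᵐ[μ] ζ n := fun n => (hmem n).coeFn_toLp
  have hXb : ∀ n, _ := fun n =>
    Lp.norm_le_of_ae_bound (f := X n) (le_max_right M 0) (by
      filter_upwards [hXcoe n, hbd.mono fun ω h => h n] with ω h1 h2
      rw [h1]; exact le_max_of_le_left h2)
  obtain ⟨y, hy⟩ := tail_hull_limit X _ hXb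
  have happrox : ∀ n, ∃ c ∈ convexHull ℝ {p | ∃ k, n ≤ k ∧ p = X k},
      dist y c < 1 / (n + 1) := by
    intro n
    exact Metric.mem_closure_iff.1 (hy n) _ (by positivity)
  choose c hcmem hcdist using happrox
  have htendc : Tendsto c atTop (𝓝 y) := by
    rw [tendsto_iff_dist_tendsto_zero]
    refine squeeze_zero (fun n => dist_nonneg) (fun n => ?_) tendsto_one_div_add_atTop_nhds_zero_nat
    rw [dist_comm]; exact (hcdist n).le
  have htm : TendstoInMeasure μ (fun n => ⇑(c n)) atTop ⇑y :=
    tendstoInMeasure_of_tendsto_Lp htendc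
  obtain ⟨ns, hns_mono, hns_ae⟩ := htm.exists_seq_tendsto_ae
  have claim : ∀ n, ∃ g : Ω → E, Measurable g ∧
      (∀ ω, g ω ∈ convexHull ℝ {p | ∃ k, n ≤ k ∧ p = ζ k ω}) ∧ g =ᵐ[μ] ⇑(c n) := by
    intro n
    have hc := hcmem n
    rw [convexHull_eq] at hc
    obtain ⟨ι, t, w, z, hw0, hw1, hz, hcc⟩ := hc
    have hsel : ∀ i, ∃ k, i ∈ t → (n ≤ k ∧ z i = X k) := by
      intro i
      by_cases h : i ∈ t
      · obtain ⟨k, hk1, hk2⟩ := hz i h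
        exact ⟨k, fun _ => ⟨hk1, hk2⟩⟩
      · exact ⟨n, fun h' => absurd h' h⟩
    choose κ hκ using hsel
    refine ⟨fun ω => ∑ i ∈ t, w i • ζ (κ i) ω, ?_, ?_, ?_⟩
    · exact Finset.measurable_sum t (fun i _ => (hζ (κ i)).const_smul (w i))
    · intro ω
      have hmm : t.centerMass w (fun j => ζ (κ j) ω) ∈
          convexHull ℝ {p : E | ∃ k, n ≤ k ∧ p = ζ k ω} :=
        Finset.centerMass_mem_convexHull t hw0 (by rw [hw1]; norm_num)
          (fun i hi => ⟨κ i, (hκ i hi).1, rfl⟩)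
      rwa [Finset.centerMass_eq_of_sum_1 _ _ hw1] at hmm
    · have hceq : c n = ∑ i ∈ t, w i • X (κ i) := by
        rw [← hcc, Finset.centerMass_eq_of_sum_1 _ _ hw1]
        exact Finset.sum_congr rfl (fun i hi => by rw [(hκ i hi).2])
      rw [hceq]
      have h1 := Lp_coeFn_finset_sum t (fun i => w i • X (κ i))
      have h2 : ∀ i, ⇑(w i • X (κ i)) =ᵐ[μ] fun ω => w i • ζ (κ i) ω := by
        intro i
        filter_upwards [Lp.coeFn_smul (w i) (X (κ i)), hXcoe (κ i)] with ω ha hb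
        simp [ha, hb]
      have h2' : ∀ᵐ ω ∂μ, ∀ i ∈ t, (w i • X (κ i) : Lp E 2 μ) ω = w i • ζ (κ i) ω :=
        (eventually_all_finset t).2 (fun i _ => h2 i)
      filter_upwards [h1, h2'] with ω ha hb
      rw [ha]
      exact Finset.sum_congr rfl (fun i hi => (hb i hi).symm)
  choose G hGmeas hGhull hGae using claim
  refine ⟨fun n => G (ns n), ⇑y, fun n => hGmeas (ns n), ?_, ?_⟩
  · intro n ω
    refine convexHull_mono ?_ (hGhull (ns n) ω)
    rintro p ⟨k, hk, he⟩
    exact ⟨k, (hns_mono.le_apply).trans hk, he⟩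
  · filter_upwards [hns_ae, ae_all_iff.2 hGae] with ω h1 h2
    exact Tendsto.congr (fun i => (h2 (ns i) ).symm) h1
theorem stmt0 {Ω : Type*} [MeasurableSpace Ω] (P : Measure Ω) [IsProbabilityMeasure P]
    (d : ℕ) (ξ : ℕ → Ω → (Fin d → ℝ)) (hmeas : ∀ n, Measurable (ξ n))
    (hbdd : ∀ᵐ ω ∂P, ∃ M : ℝ, ∀ n, ‖ξ n ω‖ ≤ M) :
    ∃ (η : ℕ → Ω → (Fin d → ℝ)) (ηlim : Ω → (Fin d → ℝ)),
      (∀ n, Measurable (η n)) ∧ Measurable ηlim ∧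
      (∀ n ω, η n ω ∈ convexHull ℝ {x | ∃ k, n ≤ k ∧ x = ξ k ω}) ∧
      ∀ᵐ ω ∂P, Tendsto (fun n => η n ω) atTop (nhds (ηlim ω)) := by
  classical
  let e : EuclideanSpace ℝ (Fin d) ≃ₗ[ℝ] (Fin d → ℝ) := WithLp.linearEquiv 2 ℝ (Fin d → ℝ)
  set ζ : ℕ → Ω → EuclideanSpace ℝ (Fin d) :=
    fun n ω => (WithLp.equiv 2 (Fin d → ℝ)).symm (ξ n ω) with hζdef
  have hζ : ∀ n, Measurable (ζ n) := fun n =>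
    (PiLp.continuous_toLp (p := 2) (β := fun _ : Fin d => ℝ)).measurable.comp (hmeas n)
  set A : ℕ → Set Ω := fun M => {ω | ∀ n, ‖ζ n ω‖ ≤ (M : ℝ)} with hAdef
  have hAmeas : ∀ M, MeasurableSet (A M) := by
    intro M
    have : A M = ⋂ n, (fun ω => ‖ζ n ω‖) ⁻¹' (Iic (M : ℝ)) := by
      ext ω; simp [hAdef, mem_iInter]
    rw [this]
    exact MeasurableSet.iInter fun n => (hζ n).norm measurableSet_Iic
  have hAae : ∀ᵐ ω ∂P, ∃ M : ℕ, ω ∈ A M := by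
    filter_upwards [hbdd] with ω hω
    obtain ⟨C, hC⟩ := hω
    have hC0 : 0 ≤ C := le_trans (norm_nonneg _) (hC 0)
    refine ⟨⌈Real.sqrt d * C⌉₊, fun n => ?_⟩
    have hb : ‖ζ n ω‖ ≤ Real.sqrt d * C := by
      rw [EuclideanSpace.norm_eq]
      have hcoord : ∀ i, ‖ζ n ω i‖ ^ 2 ≤ C ^ 2 := by
        intro i
        have h1 : ‖ζ n ω i‖ ≤ ‖ξ n ω‖ := by
          have hco : ζ n ω i = ξ n ω i := rfl
          rw [hco]
          exact norm_le_pi_norm (ξ n ω) i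
        have h2 : ‖ζ n ω i‖ ≤ C := h1.trans (hC n)
        exact pow_le_pow_left₀ (norm_nonneg _) h2 2
      have hsum : (∑ i, ‖ζ n ω i‖ ^ 2) ≤ (d : ℝ) * C ^ 2 := by
        calc (∑ i : Fin d, ‖ζ n ω i‖ ^ 2) ≤ ∑ _i : Fin d, C ^ 2 :=
              Finset.sum_le_sum fun i _ => hcoord i
        _ = (d : ℝ) * C ^ 2 := by simp [Finset.sum_const, mul_comm]
      calc Real.sqrt (∑ i, ‖ζ n ω i‖ ^ 2) ≤ Real.sqrt ((d : ℝ) * C ^ 2) :=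
            Real.sqrt_le_sqrt hsum
      _ = Real.sqrt d * C := by
            rw [Real.sqrt_mul (Nat.cast_nonneg d), Real.sqrt_sq hC0]
    exact hb.trans (Nat.le_ceil _)
  have hper : ∀ M : ℕ, ∃ (θ : ℕ → Ω → EuclideanSpace ℝ (Fin d))
      (yl : Ω → EuclideanSpace ℝ (Fin d)),
      (∀ n, Measurable (θ n)) ∧
      (∀ n ω, θ n ω ∈ convexHull ℝ {p | ∃ k, n ≤ k ∧ p = ζ k ω}) ∧
      ∀ᵐ ω ∂(P.restrict (A M)), Tendsto (fun n => θ n ω) atTop (𝓝 (yl ω)) := by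
    intro M
    exact perM (P.restrict (A M)) ζ hζ (M : ℝ)
      ((ae_restrict_iff' (hAmeas M)).2 (ae_of_all _ fun ω hω => hω))
  choose θ yl hθmeas hθhull hθae using hper
  have hconv : ∀ M : ℕ, ∀ᵐ ω ∂P, ω ∈ A M →
      Tendsto (fun n => θ M n ω) atTop (𝓝 (yl M ω)) := fun M =>
    (ae_restrict_iff' (hAmeas M)).1 (hθae M)
  letI : ∀ M : ℕ, DecidablePred (fun ω : Ω => ω ∈ A M ∪ (⋃ m, A m)ᶜ) :=
    fun M ω => Classical.propDecidable _
  have htot : ∀ ω, ∃ M : ℕ, ω ∈ A M ∪ (⋃ m, A m)ᶜ := by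
    intro ω
    by_cases h : ω ∈ ⋃ m, A m
    · obtain ⟨m, hm⟩ := mem_iUnion.1 h
      exact ⟨m, Or.inl hm⟩
    · exact ⟨0, Or.inr h⟩
  set η' : ℕ → Ω → EuclideanSpace ℝ (Fin d) :=
    fun n ω => θ (Nat.find (htot ω)) n ω with hη'def
  have hη'meas : ∀ n, Measurable (η' n) := by
    intro n
    rw [hη'def]
    exact Measurable.find (p := fun M ω => ω ∈ A M ∪ (⋃ m, A m)ᶜ) (fun M => hθmeas M n)
      (fun M => (hAmeas M).union ((MeasurableSet.iUnion hAmeas).compl)) htot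
  have hη'hull : ∀ n ω, η' n ω ∈ convexHull ℝ {p | ∃ k, n ≤ k ∧ p = ζ k ω} :=
    fun n ω => hθhull _ n ω
  have hη'ae : ∀ᵐ ω ∂P, ∃ l, Tendsto (fun n => η' n ω) atTop (𝓝 l) := by
    filter_upwards [hAae, ae_all_iff.2 hconv] with ω h1 h2
    have hu : ω ∈ ⋃ m, A m := mem_iUnion.2 h1
    have hωA : ω ∈ A (Nat.find (htot ω)) := by
      rcases Nat.find_spec (htot ω) with h | h
      · exact h
      · exact absurd hu h
    exact ⟨yl (Nat.find (htot ω)) ω, h2 _ hωA⟩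
  set Gs : Set Ω := {ω | ∃ l, Tendsto (fun n => η' n ω) atTop (𝓝 l)} with hGdef
  have hGmeas : MeasurableSet Gs := measurableSet_exists_tendsto hη'meas
  set f : ℕ → Ω → EuclideanSpace ℝ (Fin d) := fun n => Gs.indicator (η' n) with hfdef
  have hfmeas : ∀ n, Measurable (f n) := fun n => (hη'meas n).indicator hGmeas
  have hf : ∀ ω, ∃ l, Tendsto (fun n => f n ω) atTop (𝓝 l) := by
    intro ω
    by_cases h : ω ∈ Gs
    · have hmem := h
      obtain ⟨l, hl⟩ := hmem
      refine ⟨l, ?_⟩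
      have : ∀ n, f n ω = η' n ω := fun n => indicator_of_mem h _
      exact hl.congr fun n => (this n).symm
    · refine ⟨0, ?_⟩
      have : ∀ n, f n ω = 0 := fun n => indicator_of_notMem h _
      simpa [this] using tendsto_const_nhds
  set ηlimE : Ω → EuclideanSpace ℝ (Fin d) := fun ω => (hf ω).choose with hlimdef
  have hlimmeas : Measurable ηlimE :=
    measurable_of_tendsto_metrizable' atTop hfmeas
      (tendsto_pi_nhds.2 fun ω => (hf ω).choose_spec)
  have hη'tend : ∀ᵐ ω ∂P, Tendsto (fun n => η' n ω) atTop (𝓝 (ηlimE ω)) := by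
    filter_upwards [hη'ae] with ω hω
    have hωG : ω ∈ Gs := hω
    have hspec := (hf ω).choose_spec
    have heq : ∀ n, f n ω = η' n ω := fun n => indicator_of_mem hωG _
    exact hspec.congr heq
  -- transfer to the pi world
  have hcont : Continuous (fun x : EuclideanSpace ℝ (Fin d) => e x) :=
    PiLp.continuous_ofLp (p := 2) (β := fun _ : Fin d => ℝ)
  refine ⟨fun n ω => e (η' n ω), fun ω => e (ηlimE ω), ?_, ?_, ?_, ?_⟩
  · exact fun n => hcont.measurable.comp (hη'meas n)
  · exact hcont.measurable.comp hlimmeas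
  · intro n ω
    show e (η' n ω) ∈ convexHull ℝ {x | ∃ k, n ≤ k ∧ x = ξ k ω}
    have h := hη'hull n ω
    have hmem : e (η' n ω) ∈ e '' (convexHull ℝ {p | ∃ k, n ≤ k ∧ p = ζ k ω}) :=
      mem_image_of_mem _ h
    have hch : e '' (convexHull ℝ {p | ∃ k, n ≤ k ∧ p = ζ k ω})
        = convexHull ℝ (e '' {p | ∃ k, n ≤ k ∧ p = ζ k ω}) := by
      simpa using e.toLinearMap.image_convexHull {p | ∃ k, n ≤ k ∧ p = ζ k ω}
    rw [hch] at hmem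
    have himg : (⇑e) '' {p | ∃ k, n ≤ k ∧ p = ζ k ω}
        = {x | ∃ k, n ≤ k ∧ x = ξ k ω} := by
      ext x
      constructor
      · rintro ⟨p, ⟨k, hk, rfl⟩, rfl⟩
        refine ⟨k, hk, ?_⟩
        simp [hζdef, e]
      · rintro ⟨k, hk, rfl⟩
        refine ⟨ζ k ω, ⟨k, hk, rfl⟩, ?_⟩
        simp [hζdef, e]
    rwa [himg] at hmem
  · filter_upwards [hη'tend] with ω hω
    exact (hcont.tendsto _).comp hω
end

section
/- Let H ≥ 0 be an integrable random variable under every measure in a nonempty family P* of probability measures, and for α ∈ (0,1) let u(α) = inf{ sup_{Q ∈ P*} E_Q[H 1_A] : A ∈ F, P(A) ≥ α }. Then u(α) is nondecreasing in α, bounded above by sup_{Q ∈ P*} E_Q[H], and u(α) → sup_{Q ∈ P*} E_Q[H] as α ↑ 1. -/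
open MeasureTheory Filter Set

theorem stmt2 {Ω : Type*} [MeasurableSpace Ω] (P : Measure Ω) [IsProbabilityMeasure P]
    (𝒬 : Set (Measure Ω)) (h𝒬ne : 𝒬.Nonempty)
    (h𝒬prob : ∀ Q ∈ 𝒬, IsProbabilityMeasure Q)
    (hequiv : ∀ Q ∈ 𝒬, Q ≪ P ∧ P ≪ Q)
    (H : Ω → ℝ) (hH : Measurable H) (hHnn : ∀ ω, 0 ≤ H ω)
    (hint : ∀ Q ∈ 𝒬, Integrable H Q)
    (hbdd : BddAbove {r : ℝ | ∃ Q ∈ 𝒬, r = ∫ ω, H ω ∂Q})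
    (S : ℝ) (hS : S = sSup {r : ℝ | ∃ Q ∈ 𝒬, r = ∫ ω, H ω ∂Q})
    (u : ℝ → ℝ)
    (hu : ∀ a : ℝ, u a = sInf {r : ℝ | ∃ A : Set Ω, MeasurableSet A ∧
        ENNReal.ofReal a ≤ P A ∧ r = sSup {s : ℝ | ∃ Q ∈ 𝒬, s = ∫ ω in A, H ω ∂Q}}) :
    (∀ a b : ℝ, 0 < a → a ≤ b → b < 1 → u a ≤ u b) ∧
      (∀ a ∈ Set.Ioo (0 : ℝ) 1, u a ≤ S) ∧
      Tendsto u (nhdsWithin 1 (Set.Iio 1)) (nhds S) := by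
  -- notation
  set T : Set ℝ := {r : ℝ | ∃ Q ∈ 𝒬, r = ∫ ω, H ω ∂Q} with hT
  have hTne : T.Nonempty := by
    obtain ⟨Q, hQ⟩ := h𝒬ne
    exact ⟨∫ ω, H ω ∂Q, Q, hQ, rfl⟩
  have hintS : ∀ Q ∈ 𝒬, ∫ ω, H ω ∂Q ≤ S := by
    intro Q hQ
    rw [hS]
    exact le_csSup hbdd ⟨Q, hQ, rfl⟩
  -- the inner sup sets
  set W : Set Ω → Set ℝ := fun A => {s : ℝ | ∃ Q ∈ 𝒬, s = ∫ ω in A, H ω ∂Q} with hW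
  have hWne : ∀ A, (W A).Nonempty := by
    intro A
    obtain ⟨Q, hQ⟩ := h𝒬ne
    exact ⟨∫ ω in A, H ω ∂Q, Q, hQ, rfl⟩
  have hWle : ∀ A, ∀ s ∈ W A, s ≤ S := by
    rintro A s ⟨Q, hQ, rfl⟩
    exact le_trans (setIntegral_le_integral (hint Q hQ)
      (Eventually.of_forall hHnn)) (hintS Q hQ)
  have hWbdd : ∀ A, BddAbove (W A) := fun A => ⟨S, hWle A⟩
  have hWnn : ∀ A, 0 ≤ sSup (W A) := by
    intro A
    obtain ⟨Q, hQ⟩ := h𝒬ne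
    exact le_trans (integral_nonneg fun ω => hHnn ω) (le_csSup (hWbdd A) ⟨Q, hQ, rfl⟩)
  -- the outer inf sets
  set R : ℝ → Set ℝ := fun a => {r : ℝ | ∃ A : Set Ω, MeasurableSet A ∧
        ENNReal.ofReal a ≤ P A ∧ r = sSup (W A)} with hR
  have hRsub : ∀ a, R a ⊆ Icc 0 S := by
    rintro a r ⟨A, hA, hPA, rfl⟩
    exact ⟨hWnn A, csSup_le (hWne A) (hWle A)⟩
  have hRbdd : ∀ a, BddBelow (R a) := fun a => ⟨0, fun r hr => (hRsub a hr).1⟩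
  have hSW : sSup (W univ) = S := by
    rw [hS]; congr 1; ext s
    simp [hW, hT, MeasureTheory.setIntegral_univ]
  have hSR : ∀ a : ℝ, a ≤ 1 → S ∈ R a := by
    intro a ha
    refine ⟨univ, MeasurableSet.univ, ?_, hSW.symm⟩
    simp only [measure_univ]
    exact ENNReal.ofReal_le_one.2 ha
  have huleS : ∀ a : ℝ, a ≤ 1 → u a ≤ S := by
    intro a ha
    rw [hu a]
    exact csInf_le (hRbdd a) (hSR a ha)
  have hmono : ∀ a b : ℝ, a ≤ b → b ≤ 1 → u a ≤ u b := by
    intro a b hab hb1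
    rw [hu a, hu b]
    refine csInf_le_csInf (hRbdd a) ⟨S, hSR b hb1⟩ ?_
    rintro r ⟨A, hA, hPA, rfl⟩
    exact ⟨A, hA, le_trans (ENNReal.ofReal_le_ofReal hab) hPA, rfl⟩
  refine ⟨fun a b ha hab hb1 => hmono a b hab hb1.le, fun a ha => huleS a ha.2.le, ?_⟩
  -- Tendsto part
  rw [Metric.tendsto_nhds]
  intro ε hε
  -- pick Q with large integral
  obtain ⟨t, ⟨Q, hQ, rfl⟩, htS⟩ : ∃ t ∈ T, S - ε / 4 < t := by
    apply exists_lt_of_lt_csSup hTne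
    rw [← hS]; linarith
  haveI : IsProbabilityMeasure Q := h𝒬prob Q hQ
  -- step 1 : δ for the integral of H wrt Q
  have hHfin : ∫⁻ ω, ENNReal.ofReal (H ω) ∂Q ≠ ⊤ := by
    have := (hint Q hQ).hasFiniteIntegral
    rw [hasFiniteIntegral_iff_ofReal (Eventually.of_forall hHnn)] at this
    exact this.ne
  obtain ⟨δ, hδ0, hδ⟩ := exists_pos_setLIntegral_lt_of_measure_lt hHfin
    (ε := ENNReal.ofReal (ε / 4)) (by simp [ENNReal.ofReal_eq_zero]; linarith)
  -- step 2 : η for Q ≪ P via rnDeriv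
  have hrnfin : ∫⁻ ω, Q.rnDeriv P ω ∂P ≠ ⊤ := (Measure.lintegral_rnDeriv_lt_top Q P).ne
  obtain ⟨η, hη0, hη⟩ := exists_pos_setLIntegral_lt_of_measure_lt hrnfin (ε := δ) hδ0.ne'
  -- step 3 : choose a₀
  set ηr : ℝ := (min η 1).toReal with hηr
  have hηr0 : 0 < ηr := by
    apply ENNReal.toReal_pos
    · exact (lt_min hη0 (zero_lt_one : (0:ENNReal) < 1)).ne'
    · exact (lt_of_le_of_lt (min_le_right _ _) ENNReal.one_lt_top).ne
  set a₀ : ℝ := max (1/2) (1 - ηr / 2) with ha₀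
  have ha₀1 : a₀ < 1 := by
    rw [ha₀]
    apply max_lt (by norm_num)
    linarith
  -- key lower bound
  have key : ∀ a ∈ Ioo a₀ 1, S - ε / 2 ≤ u a := by
    intro a ha
    rw [hu a]
    refine le_csInf ⟨S, hSR a ha.2.le⟩ ?_
    rintro r ⟨A, hA, hPA, rfl⟩
    -- P Aᶜ is small
    have hPAc : P Aᶜ < η := by
      have h1 : P Aᶜ = 1 - P A := by
        rw [measure_compl hA (measure_ne_top P A), measure_univ]
      have h2 : P Aᶜ ≤ ENNReal.ofReal (1 - a) := by
        rw [h1, ENNReal.ofReal_sub _ (le_trans (by norm_num : (0:ℝ) ≤ 1/2)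
          (le_trans (le_max_left _ _) ha.1.le))]
        simp only [ENNReal.ofReal_one]
        exact tsub_le_tsub le_rfl hPA
      refine lt_of_le_of_lt h2 (lt_of_lt_of_le ?_ (min_le_left η 1))
      have h3 : 1 - a < ηr := by
        have := lt_of_le_of_lt (le_max_right (1/2) (1 - ηr / 2)) ha.1
        linarith
      calc ENNReal.ofReal (1 - a) < ENNReal.ofReal ηr := by
            exact (ENNReal.ofReal_lt_ofReal_iff hηr0).2 h3
        _ = min η 1 := by
            rw [hηr, ENNReal.ofReal_toReal]
            exact (lt_of_le_of_lt (min_le_right _ _) ENNReal.one_lt_top).ne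
    -- hence Q Aᶜ small
    have hQAc : Q Aᶜ < δ := by
      have := hη Aᶜ hPAc
      rwa [Measure.setLIntegral_rnDeriv (hequiv Q hQ).1 Aᶜ] at this
    -- hence the integral over Aᶜ is small
    have hintAc : ∫ ω in Aᶜ, H ω ∂Q ≤ ε / 4 := by
      have h4 := hδ Aᶜ hQAc
      have h5 : ∫ ω in Aᶜ, H ω ∂Q = (∫⁻ ω in Aᶜ, ENNReal.ofReal (H ω) ∂Q).toReal := by
        rw [integral_eq_lintegral_of_nonneg_ae (Eventually.of_forall hHnn)
          hH.aestronglyMeasurable.restrict]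
      rw [h5]
      exact ENNReal.toReal_le_of_le_ofReal (by linarith) h4.le
    have hsplit : ∫ ω in A, H ω ∂Q + ∫ ω in Aᶜ, H ω ∂Q = ∫ ω, H ω ∂Q :=
      integral_add_compl hA (hint Q hQ)
    have h6 : S - ε / 2 ≤ ∫ ω in A, H ω ∂Q := by linarith
    exact le_trans h6 (le_csSup (hWbdd A) ⟨Q, hQ, rfl⟩)
  -- conclude
  have hmem : Ioo a₀ 1 ∈ nhdsWithin (1:ℝ) (Iio 1) := by
    apply Ioo_mem_nhdsLT_of_mem
    exact ⟨ha₀1, le_rfl⟩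
  filter_upwards [hmem] with a ha
  have h1 := key a ha
  have h2 := huleS a ha.2.le
  rw [Real.dist_eq, abs_sub_lt_iff]
  constructor <;> linarith
end

section
/- Let R^α = {φ : Ω → [0,1] measurable : E_P[φ] ≥ α} for α ∈ (0,1), and let H ≥ 0 satisfy sup_{Q ∈ P*} E_Q[H] < ∞ for a nonempty family P* of probability measures equivalent to P. Then there exists φ̃ ∈ R^α with E_P[φ̃] = α such that inf_{φ ∈ R^α} sup_{Q ∈ P*} E_Q[H φ] = sup_{Q ∈ P*} E_Q[H φ̃]. -/
open MeasureTheory Filter Set Topology ENNReal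

namespace Stmt3Aux

variable {Ω : Type*} [MeasurableSpace Ω] {𝒬 : Set (Measure Ω)} {H : Ω → ℝ}

def sset (𝒬 : Set (Measure Ω)) (H : Ω → ℝ) (φ : Ω → ℝ) : Set ℝ :=
  {s : ℝ | ∃ Q ∈ 𝒬, s = ∫ ω, H ω * φ ω ∂Q}

noncomputable def fval (𝒬 : Set (Measure Ω)) (H : Ω → ℝ) (φ : Ω → ℝ) : ℝ := sSup (sset 𝒬 H φ)

lemma integrable_hmul (hH : Measurable H) (hHnn : ∀ ω, 0 ≤ H ω)
    (hint : ∀ Q ∈ 𝒬, Integrable H Q) {Q : Measure Ω} (hQ : Q ∈ 𝒬) {φ : Ω → ℝ}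
    (hφ : Measurable φ) (hφ01 : ∀ ω, φ ω ∈ Icc (0:ℝ) 1) :
    Integrable (fun ω => H ω * φ ω) Q := by
  refine (hint Q hQ).mono' ((hH.mul hφ).aestronglyMeasurable) ?_
  filter_upwards with ω
  rw [Real.norm_eq_abs, abs_of_nonneg (mul_nonneg (hHnn ω) (hφ01 ω).1)]
  calc H ω * φ ω ≤ H ω * 1 := by gcongr; exacts [hHnn ω, (hφ01 ω).2]
    _ = H ω := mul_one _

lemma sset_bddAbove (hH : Measurable H) (hHnn : ∀ ω, 0 ≤ H ω)
    (hint : ∀ Q ∈ 𝒬, Integrable H Q)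
    (hbdd : BddAbove {r : ℝ | ∃ Q ∈ 𝒬, r = ∫ ω, H ω ∂Q}) {φ : Ω → ℝ}
    (hφ : Measurable φ) (hφ01 : ∀ ω, φ ω ∈ Icc (0:ℝ) 1) :
    BddAbove (sset 𝒬 H φ) := by
  refine ⟨sSup {r : ℝ | ∃ Q ∈ 𝒬, r = ∫ ω, H ω ∂Q}, ?_⟩
  rintro s ⟨Q, hQ, rfl⟩
  have h1 : ∫ ω, H ω * φ ω ∂Q ≤ ∫ ω, H ω ∂Q := by
    refine integral_mono (integrable_hmul hH hHnn hint hQ hφ hφ01) (hint Q hQ) fun ω => ?_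
    calc H ω * φ ω ≤ H ω * 1 := by gcongr; exacts [hHnn ω, (hφ01 ω).2]
      _ = H ω := mul_one _
  exact h1.trans (le_csSup hbdd ⟨Q, hQ, rfl⟩)

lemma fval_nonneg (h𝒬ne : 𝒬.Nonempty) (hHnn : ∀ ω, 0 ≤ H ω) {φ : Ω → ℝ}
    (hbdd' : BddAbove (sset 𝒬 H φ)) (hφ01 : ∀ ω, φ ω ∈ Icc (0:ℝ) 1) : 0 ≤ fval 𝒬 H φ := by
  obtain ⟨Q, hQ⟩ := h𝒬ne
  exact le_csSup_of_le hbdd' ⟨Q, hQ, rfl⟩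
    (integral_nonneg fun ω => mul_nonneg (hHnn ω) (hφ01 ω).1)

lemma le_fval {φ : Ω → ℝ} (hbdd' : BddAbove (sset 𝒬 H φ)) {Q : Measure Ω} (hQ : Q ∈ 𝒬) :
    ∫ ω, H ω * φ ω ∂Q ≤ fval 𝒬 H φ := le_csSup hbdd' ⟨Q, hQ, rfl⟩

lemma fval_le (h𝒬ne : 𝒬.Nonempty) {φ : Ω → ℝ} {b : ℝ}
    (h : ∀ Q ∈ 𝒬, ∫ ω, H ω * φ ω ∂Q ≤ b) : fval 𝒬 H φ ≤ b := by
  refine csSup_le ?_ ?_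
  · obtain ⟨Q, hQ⟩ := h𝒬ne; exact ⟨_, Q, hQ, rfl⟩
  · rintro s ⟨Q, hQ, rfl⟩; exact h Q hQ

lemma fval_congr {P : Measure Ω} (hequiv : ∀ Q ∈ 𝒬, Q ≪ P ∧ P ≪ Q)
    {φ φ' : Ω → ℝ} (h : φ =ᵐ[P] φ') : fval 𝒬 H φ = fval 𝒬 H φ' := by
  unfold fval sset
  congr 1
  ext s
  constructor <;> rintro ⟨Q, hQ, rfl⟩ <;> refine ⟨Q, hQ, integral_congr_ae ?_⟩ <;>
    [skip; exact (EventuallyEq.mul (EventuallyEq.refl _ H)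
      (h.filter_mono (hequiv Q hQ).1.ae_le)).symm]
  exact EventuallyEq.mul (EventuallyEq.refl _ H) (h.filter_mono (hequiv Q hQ).1.ae_le)

/-- The approximate-minimizer set in `L²(P)`, at level `b`. -/
def Ktest (P : Measure Ω) [Fact ((1:ENNReal) ≤ 2)] (𝒬 : Set (Measure Ω)) (H : Ω → ℝ)
    (α b : ℝ) (g : Lp ℝ 2 P) : Prop :=
  ∃ φ : Ω → ℝ, Measurable φ ∧ (∀ ω, φ ω ∈ Icc (0:ℝ) 1) ∧ (g : Ω → ℝ) =ᵐ[P] φ ∧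
    α ≤ ∫ ω, φ ω ∂P ∧ fval 𝒬 H φ ≤ b

lemma Ktest_closed {P : Measure Ω} [IsProbabilityMeasure P] [Fact ((1:ENNReal) ≤ 2)]
    (h𝒬ne : 𝒬.Nonempty) (h𝒬prob : ∀ Q ∈ 𝒬, IsProbabilityMeasure Q)
    (hequiv : ∀ Q ∈ 𝒬, Q ≪ P ∧ P ≪ Q)
    (hH : Measurable H) (hHnn : ∀ ω, 0 ≤ H ω) (hint : ∀ Q ∈ 𝒬, Integrable H Q)
    (hbdd : BddAbove {r : ℝ | ∃ Q ∈ 𝒬, r = ∫ ω, H ω ∂Q})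
    {α b : ℝ} {u : ℕ → Lp ℝ 2 P} (hu : ∀ k, Ktest P 𝒬 H α b (u k)) {g : Lp ℝ 2 P}
    (hg : Tendsto u atTop (𝓝 g)) : Ktest P 𝒬 H α b g := by
  choose φ hφm hφ01 hφae hφint hφval using hu
  have htm : TendstoInMeasure P (fun k => (u k : Ω → ℝ)) atTop (g : Ω → ℝ) :=
    tendstoInMeasure_of_tendsto_Lp hg
  obtain ⟨ns, hns_mono, hae⟩ := htm.exists_seq_tendsto_ae
  set G : Ω → ℝ := (Lp.aestronglyMeasurable g).mk (g : Ω → ℝ) with hG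
  have hGmeas : Measurable G := (Lp.aestronglyMeasurable g).stronglyMeasurable_mk.measurable
  have hGae : (g : Ω → ℝ) =ᵐ[P] G := (Lp.aestronglyMeasurable g).ae_eq_mk
  set φt : Ω → ℝ := fun ω => max 0 (min 1 (G ω)) with hφt
  have hφtm : Measurable φt := measurable_const.max (measurable_const.min hGmeas)
  have hφt01 : ∀ ω, φt ω ∈ Icc (0:ℝ) 1 :=
    fun ω => ⟨le_max_left _ _, max_le zero_le_one (min_le_left _ _)⟩
  -- a.e. : the subsequence of witnesses tends to φt, and G = φt
  have hkey : ∀ᵐ ω ∂P, Tendsto (fun i => φ (ns i) ω) atTop (𝓝 (φt ω)) ∧ G ω = φt ω := by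
    have hall : ∀ᵐ ω ∂P, ∀ k, (u k : Ω → ℝ) ω = φ k ω := ae_all_iff.2 fun k => hφae k
    filter_upwards [hall, hae, hGae] with ω hallω haeω hGω
    have h1 : Tendsto (fun i => φ (ns i) ω) atTop (𝓝 (G ω)) := by
      rw [← hGω]
      exact haeω.congr (fun i => hallω (ns i))
    have h2 : G ω ∈ Icc (0:ℝ) 1 := isClosed_Icc.mem_of_tendsto h1
      (Eventually.of_forall fun i => hφ01 (ns i) ω)
    have h3 : G ω = φt ω := by
      simp only [hφt, max_eq_right_iff, min_eq_right_iff]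
      rw [min_eq_right h2.2, max_eq_right h2.1]
    exact ⟨h3 ▸ h1, h3⟩
  have hφtae : (g : Ω → ℝ) =ᵐ[P] φt := hGae.trans (hkey.mono fun ω h => h.2)
  refine ⟨φt, hφtm, hφt01, hφtae, ?_, ?_⟩
  · -- α ≤ ∫ φt dP
    have hT : Tendsto (fun i => ∫ ω, φ (ns i) ω ∂P) atTop (𝓝 (∫ ω, φt ω ∂P)) := by
      refine tendsto_integral_of_dominated_convergence (fun _ => (1:ℝ))
        (fun i => (hφm (ns i)).aestronglyMeasurable) (integrable_const 1)
        (fun i => Eventually.of_forall fun ω => ?_) (hkey.mono fun ω h => h.1)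
      rw [Real.norm_eq_abs, abs_of_nonneg (hφ01 (ns i) ω).1]
      exact (hφ01 (ns i) ω).2
    exact ge_of_tendsto hT (Eventually.of_forall fun i => hφint (ns i))
  · -- fval φt ≤ b
    refine fval_le h𝒬ne fun Q hQ => ?_
    haveI := h𝒬prob Q hQ
    have hQP := (hequiv Q hQ).1
    have haeQ : ∀ᵐ ω ∂Q, Tendsto (fun i => φ (ns i) ω) atTop (𝓝 (φt ω)) :=
      hQP.ae_le (hkey.mono fun ω h => h.1)
    have hT : Tendsto (fun i => ∫ ω, H ω * φ (ns i) ω ∂Q) atTop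
        (𝓝 (∫ ω, H ω * φt ω ∂Q)) := by
      refine tendsto_integral_of_dominated_convergence H
        (fun i => (hH.mul (hφm (ns i))).aestronglyMeasurable) (hint Q hQ)
        (fun i => Eventually.of_forall fun ω => ?_)
        (haeQ.mono fun ω h => h.const_mul (H ω))
      rw [Real.norm_eq_abs, abs_of_nonneg (mul_nonneg (hHnn ω) (hφ01 (ns i) ω).1)]
      calc H ω * φ (ns i) ω ≤ H ω * 1 := by gcongr; exacts [hHnn ω, (hφ01 (ns i) ω).2]
        _ = H ω := mul_one _
    refine le_of_tendsto hT (Eventually.of_forall fun i => ?_)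
    exact (le_fval (sset_bddAbove hH hHnn hint hbdd (hφm (ns i)) (hφ01 (ns i))) hQ).trans
      (hφval (ns i))


end Stmt3Aux
set_option maxHeartbeats 1000000 in
theorem stmt3 {Ω : Type*} [MeasurableSpace Ω] (P : Measure Ω) [IsProbabilityMeasure P]
    (𝒬 : Set (Measure Ω)) (h𝒬ne : 𝒬.Nonempty)
    (h𝒬prob : ∀ Q ∈ 𝒬, IsProbabilityMeasure Q)
    (hequiv : ∀ Q ∈ 𝒬, Q ≪ P ∧ P ≪ Q)
    (H : Ω → ℝ) (hH : Measurable H) (hHnn : ∀ ω, 0 ≤ H ω)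
    (hint : ∀ Q ∈ 𝒬, Integrable H Q)
    (hbdd : BddAbove {r : ℝ | ∃ Q ∈ 𝒬, r = ∫ ω, H ω ∂Q})
    (α : ℝ) (hα : α ∈ Set.Ioo (0 : ℝ) 1) :
    ∃ φt : Ω → ℝ, Measurable φt ∧ (∀ ω, φt ω ∈ Set.Icc (0 : ℝ) 1) ∧
      (∫ ω, φt ω ∂P) = α ∧
      sInf {r : ℝ | ∃ φ : Ω → ℝ, Measurable φ ∧ (∀ ω, φ ω ∈ Set.Icc (0 : ℝ) 1) ∧
          α ≤ ∫ ω, φ ω ∂P ∧ r = sSup {s : ℝ | ∃ Q ∈ 𝒬, s = ∫ ω, H ω * φ ω ∂Q}} =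
        sSup {s : ℝ | ∃ Q ∈ 𝒬, s = ∫ ω, H ω * φt ω ∂Q} := by
  classical
  open Stmt3Aux in
  obtain ⟨hα0, hα1⟩ := hα
  haveI : Fact ((1:ENNReal) ≤ 2) := fact_one_le_two_ennreal
  set S : Set ℝ := {r : ℝ | ∃ φ : Ω → ℝ, Measurable φ ∧ (∀ ω, φ ω ∈ Set.Icc (0 : ℝ) 1) ∧
      α ≤ ∫ ω, φ ω ∂P ∧ r = Stmt3Aux.fval 𝒬 H φ} with hSdef
  have hSne : S.Nonempty := by
    refine ⟨_, fun _ => α, measurable_const, fun ω => ⟨hα0.le, hα1.le⟩, ?_, rfl⟩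
    simp [integral_const]
  have hSbb : BddBelow S := by
    refine ⟨0, ?_⟩
    rintro r ⟨φ, hm, h01, hi, rfl⟩
    exact Stmt3Aux.fval_nonneg h𝒬ne hHnn (Stmt3Aux.sset_bddAbove hH hHnn hint hbdd hm h01) h01
  set I : ℝ := sInf S with hIdef
  have hI0 : 0 ≤ I := le_csInf hSne (by
    rintro r ⟨φ, hm, h01, hi, rfl⟩
    exact Stmt3Aux.fval_nonneg h𝒬ne hHnn (Stmt3Aux.sset_bddAbove hH hHnn hint hbdd hm h01) h01)
  -- the error sequence
  set en : ℕ → ℝ := fun n => 1 / (n + 1) with hendef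
  have hen_pos : ∀ n, 0 < en n := fun n => by positivity
  have hen_le : ∀ {n m : ℕ}, n ≤ m → en m ≤ en n := by
    intro n m h
    apply one_div_le_one_div_of_le (by positivity)
    exact_mod_cast Nat.add_le_add_right h 1
  have hen1 : ∀ n, en n ≤ 1 := fun n => by
    rw [hendef]
    exact div_le_one_of_le₀ (by exact_mod_cast Nat.le_add_left 1 n) (by positivity)
  -- the K sets
  set K : ℕ → (Lp ℝ 2 P) → Prop := fun n g => Stmt3Aux.Ktest P 𝒬 H α (I + en n) g with hKdef
  have hKne : ∀ n, ∃ g, K n g := by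
    intro n
    obtain ⟨r, hrS, hrlt⟩ := exists_lt_of_csInf_lt hSne (lt_add_of_pos_right I (hen_pos n))
    obtain ⟨φ, hm, h01, hi, rfl⟩ := hrS
    have hmem : MemLp φ 2 P := by
      refine MemLp.of_bound hm.aestronglyMeasurable 1 (Eventually.of_forall fun ω => ?_)
      rw [Real.norm_eq_abs, abs_of_nonneg (h01 ω).1]; exact (h01 ω).2
    exact ⟨hmem.toLp φ, φ, hm, h01, hmem.coeFn_toLp, hi, hrlt.le⟩
  have hKmono : ∀ {n m : ℕ}, n ≤ m → ∀ {g}, K m g → K n g := by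
    rintro n m h g ⟨φ, hm, h01, hae, hi, hval⟩
    exact ⟨φ, hm, h01, hae, hi, hval.trans (by linarith [hen_le h])⟩
  have hKmid : ∀ (n : ℕ) (g h : Lp ℝ 2 P), K n g → K n h → K n ((2⁻¹ : ℝ) • (g + h)) := by
    rintro n g h ⟨φg, hgm, hg01, hgae, hgi, hgval⟩ ⟨φh, hhm, hh01, hhae, hhi, hhval⟩
    refine ⟨fun ω => (φg ω + φh ω) / 2, (hgm.add hhm).div_const 2,
      fun ω => ⟨by
        have := (hg01 ω).1; have := (hh01 ω).1; linarith, by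
        have := (hg01 ω).2; have := (hh01 ω).2; linarith⟩, ?_, ?_, ?_⟩
    · filter_upwards [Lp.coeFn_smul (2⁻¹ : ℝ) (g + h), Lp.coeFn_add g h, hgae, hhae]
        with ω h1 h2 h3 h4
      simp only [h1, Pi.smul_apply, h2, Pi.add_apply, smul_eq_mul, h3, h4]
      ring
    · have hig : Integrable φg P := by
        refine (integrable_const (1:ℝ)).mono' hgm.aestronglyMeasurable
          (Eventually.of_forall fun ω => ?_)
        rw [Real.norm_eq_abs, abs_of_nonneg (hg01 ω).1]; exact (hg01 ω).2
      have hih : Integrable φh P := by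
        refine (integrable_const (1:ℝ)).mono' hhm.aestronglyMeasurable
          (Eventually.of_forall fun ω => ?_)
        rw [Real.norm_eq_abs, abs_of_nonneg (hh01 ω).1]; exact (hh01 ω).2
      have : ∫ ω, (φg ω + φh ω) / 2 ∂P = ((∫ ω, φg ω ∂P) + ∫ ω, φh ω ∂P) / 2 := by
        rw [integral_div, integral_add hig hih]
      rw [this]; linarith
    · refine Stmt3Aux.fval_le h𝒬ne fun Q hQ => ?_
      have h1 : ∫ ω, H ω * ((φg ω + φh ω) / 2) ∂Q
          = ((∫ ω, H ω * φg ω ∂Q) + ∫ ω, H ω * φh ω ∂Q) / 2 := by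
        rw [← integral_add (Stmt3Aux.integrable_hmul hH hHnn hint hQ hgm hg01)
          (Stmt3Aux.integrable_hmul hH hHnn hint hQ hhm hh01), ← integral_div]
        congr 1; ext ω; ring
      rw [h1]
      have h2 := Stmt3Aux.le_fval (Stmt3Aux.sset_bddAbove hH hHnn hint hbdd hgm hg01) hQ
      have h3 := Stmt3Aux.le_fval (Stmt3Aux.sset_bddAbove hH hHnn hint hbdd hhm hh01) hQ
      linarith
  have hnorm : ∀ (n : ℕ) (g : Lp ℝ 2 P), K n g → ‖g‖ ≤ 1 := by
    rintro n g ⟨φ, hm, h01, hae, -, -⟩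
    have hb : ∀ᵐ ω ∂P, ‖(g : Ω → ℝ) ω‖ ≤ 1 := by
      filter_upwards [hae] with ω hω
      rw [hω, Real.norm_eq_abs, abs_of_nonneg (h01 ω).1]; exact (h01 ω).2
    have := Lp.norm_le_of_ae_bound zero_le_one hb
    simpa [measureUnivNNReal, measure_univ] using this
  -- minimal norms on the K sets
  set cs : ℕ → ℝ := fun n => sInf {r : ℝ | ∃ g, K n g ∧ r = ‖g‖} with hcs
  have hcsne : ∀ n, {r : ℝ | ∃ g, K n g ∧ r = ‖g‖}.Nonempty := fun n => by
    obtain ⟨g, hg⟩ := hKne n; exact ⟨‖g‖, g, hg, rfl⟩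
  have hcsbb : ∀ n, BddBelow {r : ℝ | ∃ g, K n g ∧ r = ‖g‖} := fun n =>
    ⟨0, by rintro r ⟨g, hg, rfl⟩; exact norm_nonneg g⟩
  have hc0 : ∀ n, 0 ≤ cs n := fun n =>
    le_csInf (hcsne n) (by rintro r ⟨g, hg, rfl⟩; exact norm_nonneg g)
  have hc1 : ∀ n, cs n ≤ 1 := fun n => by
    obtain ⟨g, hg⟩ := hKne n
    exact (csInf_le (hcsbb n) ⟨g, hg, rfl⟩).trans (hnorm n g hg)
  have hcmono : Monotone cs := by
    intro n m h
    exact csInf_le_csInf (hcsbb n) (hcsne m)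
      (by rintro r ⟨g, hg, rfl⟩; exact ⟨g, hKmono h hg, rfl⟩)
  have hcbdd : BddAbove (Set.range cs) := ⟨1, by rintro r ⟨n, rfl⟩; exact hc1 n⟩
  set cl : ℝ := ⨆ n, cs n with hcl
  have hctend : Tendsto cs atTop (𝓝 cl) := tendsto_atTop_ciSup hcmono hcbdd
  have hcle : ∀ n, cs n ≤ cl := fun n => le_ciSup hcbdd n
  -- near-minimal elements
  have hψex : ∀ n, ∃ g, K n g ∧ ‖g‖ < cs n + en n := by
    intro n
    obtain ⟨r, ⟨g, hg, rfl⟩, hlt⟩ :=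
      exists_lt_of_csInf_lt (hcsne n) (lt_add_of_pos_right _ (hen_pos n))
    exact ⟨g, hg, hlt⟩
  choose ψ hψK hψn using hψex
  -- the quadratic estimate from the parallelogram law
  have hquad : ∀ n m : ℕ, n ≤ m →
      ‖ψ n - ψ m‖ ^ 2 ≤ 2*(cl^2 - cs n^2) + 6*en n + 6*en m := by
    intro n m h
    have hmid := hKmid n (ψ n) (ψ m) (hψK n) (hKmono h (hψK m))
    have h2 : 2 * cs n ≤ ‖ψ n + ψ m‖ := by
      have h3 : cs n ≤ ‖(2⁻¹ : ℝ) • (ψ n + ψ m)‖ := csInf_le (hcsbb n) ⟨_, hmid, rfl⟩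
      have h4 : ‖(2⁻¹ : ℝ) • (ψ n + ψ m)‖ = 2⁻¹ * ‖ψ n + ψ m‖ := by
        rw [norm_smul, Real.norm_eq_abs, abs_of_pos (by norm_num : (0:ℝ) < 2⁻¹)]
      rw [h4] at h3
      linarith
    have hpar := parallelogram_law_with_norm ℝ (ψ n) (ψ m)
    have hpar' : ‖ψ n + ψ m‖^2 + ‖ψ n - ψ m‖^2 = 2*(‖ψ n‖^2 + ‖ψ m‖^2) := by
      rw [sq, sq, sq, sq]; linarith
    have hA : ‖ψ n‖^2 ≤ cs n^2 + 3*en n := by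
      nlinarith [hψn n, norm_nonneg (ψ n), hc0 n, hc1 n, hen_pos n, hen1 n]
    have hB : ‖ψ m‖^2 ≤ cs m^2 + 3*en m := by
      nlinarith [hψn m, norm_nonneg (ψ m), hc0 m, hc1 m, hen_pos m, hen1 m]
    have hS : 4 * cs n^2 ≤ ‖ψ n + ψ m‖^2 := by
      nlinarith [h2, hc0 n, norm_nonneg (ψ n + ψ m)]
    have hC : cs m^2 ≤ cl^2 := by nlinarith [hc0 m, hcle m]
    linarith
  -- the sequence is Cauchy
  have hcauchy : CauchySeq ψ := by
    rw [Metric.cauchySeq_iff]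
    intro ε hε
    have h1 : Tendsto (fun N => cs N ^ 2) atTop (𝓝 (cl^2)) := hctend.pow 2
    have h2 : Tendsto en atTop (𝓝 0) := tendsto_one_div_add_atTop_nhds_zero_nat
    have htend0 : Tendsto (fun N => 2*(cl^2 - cs N^2) + 12*en N) atTop (𝓝 0) := by
      have h5 := ((h1.const_sub (cl^2)).const_mul 2).add (h2.const_mul 12)
      rw [show (0:ℝ) = 2*(cl^2-cl^2) + 12*0 by ring]
      exact h5
    have hev : ∀ᶠ N in atTop, 2*(cl^2 - cs N^2) + 12*en N < ε^2 :=
      htend0.eventually_lt_const (by positivity)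
    obtain ⟨N, hN⟩ := hev.exists_forall_of_atTop
    refine ⟨N, fun m hm n hn => ?_⟩
    have key : ∀ a b : ℕ, N ≤ a → N ≤ b → a ≤ b → ‖ψ a - ψ b‖ < ε := by
      intro a b ha hb hab
      have hq := hquad a b hab
      have hm1 : cs N ^ 2 ≤ cs a ^ 2 := by nlinarith [hc0 N, hcmono ha]
      have he1 : en a ≤ en N := hen_le ha
      have he2 : en b ≤ en N := hen_le hb
      have : ‖ψ a - ψ b‖ ^ 2 < ε ^ 2 := by
        have := hN N le_rfl
        linarith
      exact lt_of_pow_lt_pow_left₀ 2 hε.le this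
    rw [dist_eq_norm]
    rcases le_total m n with h | h
    · exact key m n hm hn h
    · rw [norm_sub_rev]; exact key n m hn hm h
  -- pass to the limit
  obtain ⟨glim, hglim⟩ := cauchySeq_tendsto_of_complete hcauchy
  have hKg : ∀ n, K n glim := by
    intro n
    have hu : ∀ k, K n (ψ (k + n)) := fun k => hKmono (Nat.le_add_left n k) (hψK (k + n))
    have hgu : Tendsto (fun k => ψ (k + n)) atTop (𝓝 glim) :=
      hglim.comp (tendsto_add_atTop_nat n)
    exact Stmt3Aux.Ktest_closed h𝒬ne h𝒬prob hequiv hH hHnn hint hbdd hu hgu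
  choose w hwm hw01 hwae hwi hwval using hKg
  have hw0I : Stmt3Aux.fval 𝒬 H (w 0) ≤ I := by
    refine le_of_forall_pos_le_add fun ε hε => ?_
    obtain ⟨n, hn⟩ := exists_nat_one_div_lt hε
    have heq : Stmt3Aux.fval 𝒬 H (w 0) = Stmt3Aux.fval 𝒬 H (w n) :=
      Stmt3Aux.fval_congr hequiv ((hwae 0).symm.trans (hwae n))
    rw [heq]
    refine (hwval n).trans ?_
    have : en n ≤ ε := by
      rw [hendef]; exact le_of_lt (by exact_mod_cast hn)
    linarith
  -- rescale to get expectation exactly α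
  set β := ∫ ω, w 0 ω ∂P with hβ
  have hαβ : α ≤ β := hwi 0
  have hβpos : 0 < β := lt_of_lt_of_le hα0 hαβ
  set cf := α / β with hcf
  have hcf0 : 0 < cf := div_pos hα0 hβpos
  have hcf1 : cf ≤ 1 := (div_le_one hβpos).2 hαβ
  have hφtm : Measurable (fun ω => cf * w 0 ω) := (hwm 0).const_mul cf
  have hφt01 : ∀ ω, cf * w 0 ω ∈ Set.Icc (0:ℝ) 1 := fun ω =>
    ⟨mul_nonneg hcf0.le (hw01 0 ω).1, mul_le_one₀ hcf1 (hw01 0 ω).1 (hw01 0 ω).2⟩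
  have hφti : ∫ ω, cf * w 0 ω ∂P = α := by
    rw [integral_const_mul, ← hβ, hcf]
    exact div_mul_cancel₀ α hβpos.ne'
  refine ⟨fun ω => cf * w 0 ω, hφtm, hφt01, hφti, ?_⟩
  show sInf S = Stmt3Aux.fval 𝒬 H (fun ω => cf * w 0 ω)
  have hub : Stmt3Aux.fval 𝒬 H (fun ω => cf * w 0 ω) ≤ I := by
    refine Stmt3Aux.fval_le h𝒬ne fun Q hQ => ?_
    have h1 : ∫ ω, H ω * (cf * w 0 ω) ∂Q = cf * ∫ ω, H ω * w 0 ω ∂Q := by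
      rw [← integral_const_mul]; congr 1; ext ω; ring
    rw [h1]
    have h2 := Stmt3Aux.le_fval (Stmt3Aux.sset_bddAbove hH hHnn hint hbdd (hwm 0) (hw01 0)) hQ
    calc cf * ∫ ω, H ω * w 0 ω ∂Q ≤ cf * I :=
          mul_le_mul_of_nonneg_left (h2.trans hw0I) hcf0.le
      _ ≤ I := mul_le_of_le_one_left hI0 hcf1
  have hlb : I ≤ Stmt3Aux.fval 𝒬 H (fun ω => cf * w 0 ω) :=
    csInf_le hSbb ⟨fun ω => cf * w 0 ω, hφtm, hφt01, le_of_eq hφti.symm, rfl⟩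
  exact le_antisymm hlb hub
end

section
/- Fix C > 0. For α ∈ (0,1) let u(α) = inf{u ∈ R : ∃ predictable ξ with sup_k ||ξ_k||_∞ ≤ C and P(u + Σ_{k=1}^T ξ_k·(X_k − X_{k−1}) ≥ H) ≥ α}. Then α ↦ u(α) is nondecreasing and lim_{α↑1} u(α) ≥ sup_{Q ∈ P*} E_Q[H]. -/
open MeasureTheory Filter Set
open scoped ENNReal

section Aux

variable {Ω : Type*} {m0 : MeasurableSpace Ω}

/-- ε-δ absolute continuity: the integral of a nonnegative `Q`-integrable function over a set
is small when the `P`-measure of the set is small, provided `Q ≪ P`. -/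
lemma aux_absCont (P Q : Measure Ω) [IsFiniteMeasure P] [IsFiniteMeasure Q]
    (hQP : Q ≪ P) {g : Ω → ℝ} (hg : Measurable g) (hg0 : ∀ ω, 0 ≤ g ω)
    (hgint : Integrable g Q) {ε : ℝ} (hε : 0 < ε) :
    ∃ δ : ℝ, 0 < δ ∧ ∀ s : Set Ω, MeasurableSet s → P s ≤ ENNReal.ofReal δ →
      ∫ ω in s, g ω ∂Q ≤ ε := by
  have hQ : P.withDensity (Q.rnDeriv P) = Q := Measure.withDensity_rnDeriv_eq Q P hQP
  have hf : Measurable (Q.rnDeriv P) := Measure.measurable_rnDeriv Q P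
  have hgm : Measurable fun ω => ENNReal.ofReal (g ω) := hg.ennreal_ofReal
  have hfin : ∫⁻ ω, ENNReal.ofReal (g ω) ∂Q ≠ ∞ := by
    rw [← ofReal_integral_eq_lintegral_ofReal hgint (ae_of_all _ hg0)]
    exact ENNReal.ofReal_ne_top
  have hfin' : ∫⁻ ω, Q.rnDeriv P ω * ENNReal.ofReal (g ω) ∂P ≠ ∞ := by
    have h : ∫⁻ ω, ENNReal.ofReal (g ω) ∂Q
        = ∫⁻ ω, Q.rnDeriv P ω * ENNReal.ofReal (g ω) ∂P := by
      conv_lhs => rw [← hQ]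
      rw [lintegral_withDensity_eq_lintegral_mul P hf hgm]
      rfl
    rw [← h]; exact hfin
  obtain ⟨δ, hδ0, hδ⟩ := exists_pos_setLIntegral_lt_of_measure_lt (μ := P)
    (f := fun ω => Q.rnDeriv P ω * ENNReal.ofReal (g ω)) hfin'
    (ε := ENNReal.ofReal ε) (by simp [ENNReal.ofReal_eq_zero]; linarith)
  set δ' := min δ 1 with hδ'def
  have hδ'0 : δ' ≠ 0 := (lt_min hδ0 one_pos).ne'
  have hδ't : δ' ≠ ∞ := ne_top_of_le_ne_top ENNReal.one_ne_top (min_le_right _ _)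
  have h0 : 0 < δ'.toReal := ENNReal.toReal_pos hδ'0 hδ't
  refine ⟨δ'.toReal / 2, by linarith, fun s hs hPs => ?_⟩
  have hlt : P s < δ := by
    calc P s ≤ ENNReal.ofReal (δ'.toReal / 2) := hPs
      _ < ENNReal.ofReal δ'.toReal := (ENNReal.ofReal_lt_ofReal_iff h0).2 (by linarith)
      _ = δ' := ENNReal.ofReal_toReal hδ't
      _ ≤ δ := min_le_left _ _
  have h2 := hδ s hlt
  have hkey : ∫⁻ ω in s, ENNReal.ofReal (g ω) ∂Q
      = ∫⁻ ω in s, Q.rnDeriv P ω * ENNReal.ofReal (g ω) ∂P := by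
    conv_lhs => rw [← hQ]
    rw [setLIntegral_withDensity_eq_setLIntegral_mul P hf hgm hs]
    rfl
  have h3 : ∫ ω in s, g ω ∂Q = (∫⁻ ω in s, ENNReal.ofReal (g ω) ∂Q).toReal := by
    rw [integral_eq_lintegral_of_nonneg_ae (ae_of_all _ hg0) hg.aestronglyMeasurable.restrict]
  rw [h3, hkey]
  exact ENNReal.toReal_le_of_le_ofReal hε.le h2.le

/-- A single term of a bounded martingale transform is integrable and has zero expectation. -/
lemma aux_term (Q : Measure Ω) [IsProbabilityMeasure Q]
    (ℱ : Filtration ℕ m0) {d : ℕ} {X : ℕ → Ω → (Fin d → ℝ)} (hX : Martingale X ℱ Q)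
    {k : ℕ} {f : Ω → ℝ} (hf : StronglyMeasurable[ℱ (k - 1)] f)
    {c : ℝ} (hfb : ∀ ω, |f ω| ≤ c) (i : Fin d) :
    Integrable (fun ω => f ω * (X k ω i - X (k - 1) ω i)) Q ∧
      ∫ ω, f ω * (X k ω i - X (k - 1) ω i) ∂Q = 0 := by
  have hm : (ℱ (k - 1) : MeasurableSpace Ω) ≤ m0 := ℱ.le _
  set L : (Fin d → ℝ) →L[ℝ] ℝ := ContinuousLinearMap.proj i with hL
  have hXi : ∀ n, Integrable (fun ω => X n ω i) Q := fun n => by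
    simpa [hL] using L.integrable_comp (hX.integrable n)
  have hset : ∀ s : Set Ω, MeasurableSet[ℱ (k - 1)] s →
      ∫ ω in s, X (k - 1) ω i ∂Q = ∫ ω in s, X k ω i ∂Q := by
    intro s hs
    have h1 := hX.setIntegral_eq (Nat.sub_le k 1) hs
    calc ∫ ω in s, X (k - 1) ω i ∂Q = L (∫ ω in s, X (k - 1) ω ∂Q) := by
          rw [← L.integral_comp_comm ((hX.integrable (k - 1)).integrableOn)]
          simp [hL]
      _ = L (∫ ω in s, X k ω ∂Q) := by rw [h1]
      _ = ∫ ω in s, X k ω i ∂Q := by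
          rw [← L.integral_comp_comm ((hX.integrable k).integrableOn)]
          simp [hL]
  have hXk1m : StronglyMeasurable[ℱ (k - 1)] (fun ω => X (k - 1) ω i) :=
    (continuous_apply i).comp_stronglyMeasurable (hX.stronglyAdapted (k - 1))
  have hcond1 : (fun ω => X (k - 1) ω i) =ᵐ[Q] Q[fun ω => X k ω i | ℱ (k - 1)] :=
    ae_eq_condExp_of_forall_setIntegral_eq hm (hXi k)
      (fun s _ _ => (hXi (k - 1)).integrableOn)
      (fun s hs _ => hset s hs)
      hXk1m.aestronglyMeasurable
  have hΔi : Integrable (fun ω => X k ω i - X (k - 1) ω i) Q := (hXi k).sub (hXi (k - 1))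
  have hcond0 : Q[fun ω => X k ω i - X (k - 1) ω i | ℱ (k - 1)] =ᵐ[Q] 0 := by
    have heq : (fun ω => X k ω i - X (k - 1) ω i)
        = (fun ω => X k ω i) - (fun ω => X (k - 1) ω i) := rfl
    rw [heq]
    have h2 : Q[fun ω => X (k - 1) ω i | ℱ (k - 1)] = fun ω => X (k - 1) ω i :=
      condExp_of_stronglyMeasurable hm hXk1m (hXi (k - 1))
    refine (condExp_sub (hXi k) (hXi (k - 1)) _).trans ?_
    rw [h2]
    filter_upwards [hcond1] with ω hω
    simp only [Pi.sub_apply, Pi.zero_apply, ← hω, sub_self]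
  have hfb' : ∃ c', ∀ ω, ‖f ω‖ ≤ c' := ⟨c, fun ω => by simpa using hfb ω⟩
  have hmul_int : Integrable (f * fun ω => X k ω i - X (k - 1) ω i) Q :=
    hΔi.bdd_mul (hf.mono hm).aestronglyMeasurable (ae_of_all _ hfb'.choose_spec)
  have hzero : Q[(f * fun ω => X k ω i - X (k - 1) ω i) | ℱ (k - 1)] =ᵐ[Q] 0 := by
    refine (condExp_mul_of_stronglyMeasurable_left hf hmul_int hΔi).trans ?_
    filter_upwards [hcond0] with ω hω
    simp only [Pi.mul_apply, Pi.zero_apply] at hω ⊢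
    rw [hω, mul_zero]
  refine ⟨hmul_int, ?_⟩
  have : ∫ ω, (f * fun ω => X k ω i - X (k - 1) ω i) ω ∂Q = 0 := by
    rw [← integral_condExp hm (f := f * fun ω => X k ω i - X (k - 1) ω i)]
    exact integral_eq_zero_of_ae hzero
  simpa using this


/-- Key inequality: for any admissible pair `(v, ξ)` and success set `A`,
`∫_A H + v·Q(Aᶜ) - C·∫_{Aᶜ} G ≤ v`. -/
lemma aux_key (Q : Measure Ω) [IsProbabilityMeasure Q]
    (ℱ : Filtration ℕ m0) {d T : ℕ} {X : ℕ → Ω → (Fin d → ℝ)} (hX : Martingale X ℱ Q)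
    {H : Ω → ℝ} (hH : Measurable H) (hHint : Integrable H Q)
    {C : ℝ}
    {ξ : ℕ → Ω → Fin d → ℝ} (hξm : ∀ k, 1 ≤ k → StronglyMeasurable[ℱ (k - 1)] (ξ k))
    (hξb : ∀ k ω i, |ξ k ω i| ≤ C) (v : ℝ)
    (G : Ω → ℝ) (hG : G = fun ω => ∑ k ∈ Finset.Icc 1 T, ∑ i, |X k ω i - X (k - 1) ω i|) :
    ∃ A : Set Ω,
      A = {ω | H ω ≤ v + ∑ k ∈ Finset.Icc 1 T, ∑ i, ξ k ω i * (X k ω i - X (k - 1) ω i)} ∧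
      MeasurableSet A ∧
      ∫ ω in A, H ω ∂Q + v * (Q Aᶜ).toReal - C * ∫ ω in Aᶜ, G ω ∂Q ≤ v := by
  have hXm : ∀ n, Measurable (X n) := fun n => ((hX.stronglyAdapted n).mono (ℱ.le n)).measurable
  have hXim : ∀ n i, Measurable fun ω => X n ω i := fun n i => measurable_pi_iff.1 (hXm n) i
  have hXiInt : ∀ n i, Integrable (fun ω => X n ω i) Q := fun n i => by
    simpa using (ContinuousLinearMap.proj (R := ℝ) (φ := fun _ : Fin d => ℝ)
      i).integrable_comp (hX.integrable n)
  have hξim : ∀ k, 1 ≤ k → ∀ i, Measurable fun ω => ξ k ω i := fun k hk i =>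
    measurable_pi_iff.1 ((hξm k hk).mono (ℱ.le _)).measurable i
  set W : Ω → ℝ :=
    fun ω => ∑ k ∈ Finset.Icc 1 T, ∑ i, ξ k ω i * (X k ω i - X (k - 1) ω i) with hW
  have hWm : Measurable W := by
    rw [hW]
    exact Finset.measurable_sum _ fun k hk => Finset.measurable_sum _ fun i _ =>
      (hξim k (Finset.mem_Icc.1 hk).1 i).mul ((hXim k i).sub (hXim (k - 1) i))
  have htermInt : ∀ k ∈ Finset.Icc 1 T, ∀ i,
      Integrable (fun ω => ξ k ω i * (X k ω i - X (k - 1) ω i)) Q := fun k hk i =>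
    (aux_term Q ℱ hX
      ((continuous_apply i).comp_stronglyMeasurable (hξm k (Finset.mem_Icc.1 hk).1))
      (fun ω => hξb k ω i) i).1
  have hWint : Integrable W Q := by
    rw [hW]
    exact integrable_finset_sum _ fun k hk =>
      integrable_finset_sum _ fun i _ => htermInt k hk i
  have hWzero : ∫ ω, W ω ∂Q = 0 := by
    rw [hW, integral_finset_sum _ fun k hk =>
      integrable_finset_sum _ fun i _ => htermInt k hk i]
    refine Finset.sum_eq_zero fun k hk => ?_
    rw [integral_finset_sum _ fun i _ => htermInt k hk i]
    refine Finset.sum_eq_zero fun i _ => ?_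
    exact (aux_term Q ℱ hX
      ((continuous_apply i).comp_stronglyMeasurable (hξm k (Finset.mem_Icc.1 hk).1))
      (fun ω => hξb k ω i) i).2
  have hGnn : ∀ ω, 0 ≤ G ω := by
    intro ω; rw [hG]
    exact Finset.sum_nonneg fun k _ => Finset.sum_nonneg fun i _ => abs_nonneg _
  have hGint : Integrable G Q := by
    rw [hG]
    exact integrable_finset_sum _ fun k _ =>
      integrable_finset_sum _ fun i _ => ((hXiInt k i).sub (hXiInt (k - 1) i)).abs
  have hWbd : ∀ ω, |W ω| ≤ C * G ω := by
    intro ω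
    rw [hG, hW, Finset.mul_sum]
    refine (Finset.abs_sum_le_sum_abs _ _).trans (Finset.sum_le_sum fun k _ => ?_)
    rw [Finset.mul_sum]
    refine (Finset.abs_sum_le_sum_abs _ _).trans (Finset.sum_le_sum fun i _ => ?_)
    rw [abs_mul]
    exact mul_le_mul_of_nonneg_right (hξb k ω i) (abs_nonneg _)
  refine ⟨{ω | H ω ≤ v + W ω}, by simp only [hW], ?_, ?_⟩
  · exact measurableSet_le hH (measurable_const.add hWm)
  set A := {ω | H ω ≤ v + W ω} with hA
  have hAmeas : MeasurableSet A := measurableSet_le hH (measurable_const.add hWm)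
  have hvW : Integrable (fun ω => v + W ω) Q := (integrable_const v).add hWint
  have hintEq : ∫ ω, (v + W ω) ∂Q = v := by
    rw [integral_add (integrable_const v) hWint, hWzero, integral_const]
    simp
  have hsplit : (∫ ω in A, (v + W ω) ∂Q) + ∫ ω in Aᶜ, (v + W ω) ∂Q = v := by
    rw [integral_add_compl hAmeas hvW, hintEq]
  have h1 : ∫ ω in A, H ω ∂Q ≤ ∫ ω in A, (v + W ω) ∂Q :=
    setIntegral_mono_on hHint.integrableOn hvW.integrableOn hAmeas fun ω hω => hω
  have h2 : ∫ ω in Aᶜ, (v + W ω) ∂Q = v * (Q Aᶜ).toReal + ∫ ω in Aᶜ, W ω ∂Q := by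
    rw [integral_add (integrable_const v).integrableOn hWint.integrableOn,
      setIntegral_const, smul_eq_mul, mul_comm]
    rfl
  have h3 : -(C * ∫ ω in Aᶜ, G ω ∂Q) ≤ ∫ ω in Aᶜ, W ω ∂Q := by
    have habs : |∫ ω in Aᶜ, W ω ∂Q| ≤ ∫ ω in Aᶜ, C * G ω ∂Q := by
      refine (le_trans ?_ (integral_mono hWint.abs.integrableOn
        ((hGint.const_mul C).integrableOn) hWbd))
      simpa [Real.norm_eq_abs] using
        norm_integral_le_integral_norm (μ := Q.restrict Aᶜ) W
    rw [integral_const_mul] at habs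
    exact (abs_le.1 habs).1
  linarith [h1, h2, h3, hsplit]


/-- Measurability, nonnegativity and integrability of the dominating function `G`. -/
lemma aux_G (Q : Measure Ω) [IsProbabilityMeasure Q]
    (ℱ : Filtration ℕ m0) {d T : ℕ} {X : ℕ → Ω → (Fin d → ℝ)} (hX : Martingale X ℱ Q)
    (G : Ω → ℝ) (hG : G = fun ω => ∑ k ∈ Finset.Icc 1 T, ∑ i, |X k ω i - X (k - 1) ω i|) :
    Measurable G ∧ (∀ ω, 0 ≤ G ω) ∧ Integrable G Q := by
  have hXm : ∀ n, Measurable (X n) := fun n => ((hX.stronglyAdapted n).mono (ℱ.le n)).measurable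
  have hXim : ∀ n i, Measurable fun ω => X n ω i := fun n i => measurable_pi_iff.1 (hXm n) i
  have hXiInt : ∀ n i, Integrable (fun ω => X n ω i) Q := fun n i => by
    simpa using (ContinuousLinearMap.proj (R := ℝ) (φ := fun _ : Fin d => ℝ)
      i).integrable_comp (hX.integrable n)
  refine ⟨?_, ?_, ?_⟩
  · rw [hG]
    exact Finset.measurable_sum _ fun k _ => Finset.measurable_sum _ fun i _ =>
      ((hXim k i).sub (hXim (k - 1) i)).abs
  · intro ω; rw [hG]
    exact Finset.sum_nonneg fun k _ => Finset.sum_nonneg fun i _ => abs_nonneg _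
  · rw [hG]
    exact integrable_finset_sum _ fun k _ =>
      integrable_finset_sum _ fun i _ => ((hXiInt k i).sub (hXiInt (k - 1) i)).abs

end Aux

theorem stmt6 {Ω : Type*} {m0 : MeasurableSpace Ω} (P : Measure Ω) [IsProbabilityMeasure P]
    (ℱ : Filtration ℕ m0) (hℱ0 : ℱ 0 = ⊥)
    (d T : ℕ) (X : ℕ → Ω → (Fin d → ℝ))
    (𝒬 : Set (Measure Ω)) (h𝒬ne : 𝒬.Nonempty)
    (h𝒬prob : ∀ Q ∈ 𝒬, IsProbabilityMeasure Q)
    (hequiv : ∀ Q ∈ 𝒬, Q ≪ P ∧ P ≪ Q)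
    (hX : ∀ Q ∈ 𝒬, Martingale X ℱ Q)
    (H : Ω → ℝ) (hH : Measurable H) (hHnn : ∀ ω, 0 ≤ H ω)
    (hint : ∀ Q ∈ 𝒬, Integrable H Q)
    (hbdd : BddAbove {r : ℝ | ∃ Q ∈ 𝒬, r = ∫ ω, H ω ∂Q})
    (S : ℝ) (hS : S = sSup {r : ℝ | ∃ Q ∈ 𝒬, r = ∫ ω, H ω ∂Q})
    (C : ℝ) (hC : 0 < C)
    (u : ℝ → ℝ)
    (hu : ∀ a : ℝ, u a = sInf {v : ℝ | ∃ ξ : ℕ → Ω → (Fin d → ℝ),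
        (∀ k, 1 ≤ k → StronglyMeasurable[ℱ (k - 1)] (ξ k)) ∧
        (∀ k ω i, |ξ k ω i| ≤ C) ∧
        ENNReal.ofReal a ≤ P {ω | H ω ≤
          v + ∑ k ∈ Finset.Icc 1 T, ∑ i, ξ k ω i * (X k ω i - X (k - 1) ω i)}}) :
    (∀ a b : ℝ, 0 < a → a ≤ b → b < 1 → u a ≤ u b) ∧
      ∀ ε : ℝ, 0 < ε → ∃ a ∈ Set.Ioo (0 : ℝ) 1, S - ε ≤ u a := by
  classical
  obtain ⟨Q₀, hQ₀⟩ := h𝒬ne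
  haveI hQ₀prob : IsProbabilityMeasure Q₀ := h𝒬prob Q₀ hQ₀
  set G₀ : Ω → ℝ := fun ω => ∑ k ∈ Finset.Icc 1 T, ∑ i, |X k ω i - X (k - 1) ω i| with hG₀
  obtain ⟨hG₀m, hG₀nn, hG₀int⟩ := aux_G Q₀ ℱ (hX Q₀ hQ₀) G₀ hG₀
  -- nonemptiness of the admissible set for levels `< 1`
  have hne : ∀ b : ℝ, b < 1 → ∃ v : ℝ, v ∈ {v : ℝ | ∃ ξ : ℕ → Ω → (Fin d → ℝ),
      (∀ k, 1 ≤ k → StronglyMeasurable[ℱ (k - 1)] (ξ k)) ∧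
      (∀ k ω i, |ξ k ω i| ≤ C) ∧
      ENNReal.ofReal b ≤ P {ω | H ω ≤
        v + ∑ k ∈ Finset.Icc 1 T, ∑ i, ξ k ω i * (X k ω i - X (k - 1) ω i)}} := by
    intro b hb
    have hmono : Monotone fun n : ℕ => {ω | H ω ≤ (n : ℝ)} := by
      intro m n hmn ω hω
      simp only [mem_setOf_eq] at hω ⊢
      exact le_trans hω (Nat.cast_le.2 hmn)
    have hiU : ⋃ n : ℕ, {ω | H ω ≤ (n : ℝ)} = univ := by
      ext ω
      simp only [mem_iUnion, mem_setOf_eq, mem_univ, iff_true]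
      exact exists_nat_ge (H ω)
    have htend := tendsto_measure_iUnion_atTop (μ := P) hmono
    rw [hiU, measure_univ] at htend
    have hblt : ENNReal.ofReal b < 1 := ENNReal.ofReal_lt_one.2 hb
    obtain ⟨n, hn⟩ := ((tendsto_order.1 htend).1 _ hblt).exists
    refine ⟨(n : ℝ), fun _ _ _ => 0, fun k _ => stronglyMeasurable_const,
      fun k ω i => by simpa using hC.le, ?_⟩
    simpa using hn.le
  -- lower-boundedness of the admissible set for levels `> 0`
  have hbddS : ∀ a : ℝ, 0 < a → BddBelow {v : ℝ | ∃ ξ : ℕ → Ω → (Fin d → ℝ),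
      (∀ k, 1 ≤ k → StronglyMeasurable[ℱ (k - 1)] (ξ k)) ∧
      (∀ k ω i, |ξ k ω i| ≤ C) ∧
      ENNReal.ofReal a ≤ P {ω | H ω ≤
        v + ∑ k ∈ Finset.Icc 1 T, ∑ i, ξ k ω i * (X k ω i - X (k - 1) ω i)}} := by
    intro a ha
    obtain ⟨δ, hδ0, hδ⟩ := aux_absCont Q₀ P (hequiv Q₀ hQ₀).2 measurable_const
      (fun _ => zero_le_one) (integrable_const 1) (half_pos ha)
    refine ⟨-(C * ∫ ω, G₀ ω ∂Q₀) / δ, fun v hv => ?_⟩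
    obtain ⟨ξ, hξm, hξb, hP⟩ := hv
    obtain ⟨A, hAeq, hAmeas, hkey⟩ :=
      aux_key Q₀ ℱ (hX Q₀ hQ₀) hH (hint Q₀ hQ₀) hξm hξb v G₀ hG₀
    rw [← hAeq] at hP
    have hPA : a ≤ (P A).toReal := (ENNReal.ofReal_le_iff_le_toReal (measure_ne_top P A)).1 hP
    have hQA : ¬ Q₀ A ≤ ENNReal.ofReal δ := by
      intro h
      have h2 := hδ A hAmeas h
      rw [setIntegral_const, smul_eq_mul, mul_one] at h2
      rw [measureReal_def] at h2
      linarith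
    have hδA : δ ≤ (Q₀ A).toReal :=
      (ENNReal.ofReal_le_iff_le_toReal (measure_ne_top Q₀ A)).1 (le_of_not_ge hQA)
    have hsum : (Q₀ A).toReal + (Q₀ Aᶜ).toReal = 1 := by
      rw [← ENNReal.toReal_add (measure_ne_top _ _) (measure_ne_top _ _),
        measure_add_measure_compl hAmeas, measure_univ, ENNReal.toReal_one]
    have hq0 : 0 ≤ (Q₀ Aᶜ).toReal := ENNReal.toReal_nonneg
    have hIH : 0 ≤ ∫ ω in A, H ω ∂Q₀ := setIntegral_nonneg hAmeas fun ω _ => hHnn ω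
    have hIG : ∫ ω in Aᶜ, G₀ ω ∂Q₀ ≤ ∫ ω, G₀ ω ∂Q₀ :=
      setIntegral_le_integral hG₀int (ae_of_all _ hG₀nn)
    have hIGnn : 0 ≤ ∫ ω, G₀ ω ∂Q₀ := integral_nonneg hG₀nn
    have hQA1 : δ ≤ 1 - (Q₀ Aᶜ).toReal := by linarith
    rw [div_le_iff₀ hδ0]
    rcases le_or_gt 0 v with hv0 | hv0
    · nlinarith [mul_nonneg hv0 hδ0.le, mul_nonneg hC.le hIGnn]
    · nlinarith [mul_le_mul_of_nonpos_left hQA1 hv0.le,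
        mul_le_mul_of_nonneg_left hIG hC.le]
  constructor
  · intro a b ha hab hb1
    rw [hu a, hu b]
    refine csInf_le_csInf (hbddS a ha) (hne b hb1) ?_
    rintro v ⟨ξ, h1, h2, h3⟩
    exact ⟨ξ, h1, h2, le_trans (ENNReal.ofReal_le_ofReal hab) h3⟩
  · intro ε hε
    have hSnn : 0 ≤ S := by
      rw [hS]
      exact le_trans (integral_nonneg fun ω => hHnn ω) (le_csSup hbdd ⟨Q₀, hQ₀, rfl⟩)
    have hlt : S - ε / 4 < sSup {r : ℝ | ∃ Q ∈ 𝒬, r = ∫ ω, H ω ∂Q} := by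
      rw [← hS]; linarith
    obtain ⟨r, ⟨Q, hQ, rfl⟩, hr⟩ := exists_lt_of_lt_csSup (Set.nonempty_of_mem (show (∫ ω, H ω ∂Q₀) ∈ {r : ℝ | ∃ Q ∈ 𝒬, r = ∫ ω, H ω ∂Q} from ⟨Q₀, hQ₀, rfl⟩)) hlt
    haveI : IsProbabilityMeasure Q := h𝒬prob Q hQ
    obtain ⟨hGm, hGnn, hGint⟩ := aux_G Q ℱ (hX Q hQ) G₀ hG₀
    set F : Ω → ℝ := fun ω => H ω + C * G₀ ω + 1 with hF
    have hFm : Measurable F := by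
      rw [hF]; exact (hH.add (hG₀m.const_mul C)).add measurable_const
    have hFnn : ∀ ω, 0 ≤ F ω := fun ω => by
      simp only [hF]
      have h1 := mul_nonneg hC.le (hGnn ω)
      have h2 := hHnn ω
      linarith
    have hFint : Integrable F Q := by
      rw [hF]; exact ((hint Q hQ).add (hGint.const_mul C)).add (integrable_const 1)
    set ε₀ : ℝ := min (ε / 4) (1 / 6) with hε₀def
    have hε₀ : 0 < ε₀ := lt_min (by linarith) (by norm_num)
    obtain ⟨δ, hδ0, hδ⟩ := aux_absCont P Q (hequiv Q hQ).1 hFm hFnn hFint hε₀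
    set a : ℝ := 1 - min δ 1 / 2 with ha_def
    have hd0 : 0 < min δ 1 := lt_min hδ0 one_pos
    have hd1 : min δ 1 ≤ 1 := min_le_right _ _
    have haI : a ∈ Set.Ioo (0 : ℝ) 1 :=
      ⟨by rw [ha_def]; linarith, by rw [ha_def]; linarith⟩
    refine ⟨a, haI, ?_⟩
    rw [hu a]
    refine le_csInf (hne a haI.2) ?_
    rintro v ⟨ξ, hξm, hξb, hP⟩
    obtain ⟨A, hAeq, hAmeas, hkey⟩ :=
      aux_key Q ℱ (hX Q hQ) hH (hint Q hQ) hξm hξb v G₀ hG₀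
    rw [← hAeq] at hP
    have hPAc : P Aᶜ ≤ ENNReal.ofReal δ := by
      rw [prob_compl_eq_one_sub hAmeas]
      calc 1 - P A ≤ 1 - ENNReal.ofReal a := tsub_le_tsub_left hP 1
        _ = ENNReal.ofReal 1 - ENNReal.ofReal a := by rw [ENNReal.ofReal_one]
        _ = ENNReal.ofReal (1 - a) := (ENNReal.ofReal_sub 1 haI.1.le).symm
        _ ≤ ENNReal.ofReal δ := ENNReal.ofReal_le_ofReal
            (by rw [ha_def]; have := min_le_left δ 1; linarith)
    have hFc : ∫ ω in Aᶜ, F ω ∂Q ≤ ε₀ := hδ Aᶜ hAmeas.compl hPAc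
    have hHc : ∫ ω in Aᶜ, H ω ∂Q ≤ ε₀ := by
      refine le_trans (integral_mono (hint Q hQ).integrableOn hFint.integrableOn
        fun ω => ?_) hFc
      simp only [hF]
      have := mul_nonneg hC.le (hGnn ω)
      linarith
    have hGc : C * ∫ ω in Aᶜ, G₀ ω ∂Q ≤ ε₀ := by
      have h := integral_mono (μ := Q.restrict Aᶜ) (hGint.const_mul C).integrableOn hFint.integrableOn
        (fun ω => by
          simp only [hF]
          have := hHnn ω
          linarith)
      rw [integral_const_mul] at h
      exact le_trans h hFc
    have hqc : (Q Aᶜ).toReal ≤ ε₀ := by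
      have h := integral_mono (μ := Q.restrict Aᶜ) (integrable_const (1 : ℝ)).integrableOn hFint.integrableOn
        (fun ω => by
          simp only [hF]
          have h1 := hHnn ω
          have h2 := mul_nonneg hC.le (hGnn ω)
          linarith)
      rw [setIntegral_const, smul_eq_mul, mul_one] at h
      exact le_trans h hFc
    have hIA : ∫ ω in A, H ω ∂Q = (∫ ω, H ω ∂Q) - ∫ ω in Aᶜ, H ω ∂Q := by
      have := integral_add_compl hAmeas (hint Q hQ)
      linarith
    have hq0 : 0 ≤ (Q Aᶜ).toReal := ENNReal.toReal_nonneg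
    have hε₀le : ε₀ ≤ ε / 4 := min_le_left _ _
    have hε₀le6 : ε₀ ≤ 1 / 6 := min_le_right _ _
    rcases le_or_gt 0 v with hv0 | hv0
    · nlinarith [mul_nonneg hv0 hq0]
    · have hq16 : (Q Aᶜ).toReal ≤ 1 / 6 := le_trans hqc hε₀le6
      nlinarith [mul_le_mul_of_nonpos_left hq16 hv0.le]
end

section
/- Let G ≥ 0 be a random variable, B_{t−1}^* an F_{t−1}-measurable random variable with |B_{t−1}^* − B_{t−1}| ≤ ε̃ a.s., and define B_t^* = esssup{ F 1_A + B_{t−1}^* 1_{A^c} : F is an F_t-measurable random variable from a class C, A ∈ F_t, B_{t−1}^* ≤ F 1_A + B_{t−1}^* 1_{A^c} ≤ G + ε̃ a.s. }, where B_t = esssup{ D F_t-measurable : B_{t−1} ≤ D ≤ G a.s. }. If the class C is dense in probability among F_t-measurable functions (i.e., for every F_t-measurable Z and δ, η > 0 there is F ∈ C with P(|F − Z| > δ) < η), then |B_t^* − B_t| ≤ ε̃ P-almost surely. -/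
open MeasureTheory Filter Set

/-- `g` is an essential supremum (under `P`) of the family `S` of random variables. -/
def IsEssSup {Ω : Type*} {mΩ : MeasurableSpace Ω} (P : Measure Ω)
    (S : Set (Ω → ℝ)) (g : Ω → ℝ) : Prop :=
  (∀ f ∈ S, f ≤ᵐ[P] g) ∧ ∀ h : Ω → ℝ, (∀ f ∈ S, f ≤ᵐ[P] h) → g ≤ᵐ[P] h

theorem stmt15 {Ω : Type*} {m0 : MeasurableSpace Ω} (P : Measure Ω) [IsProbabilityMeasure P]
    (mt : MeasurableSpace Ω) (hmt : mt ≤ m0)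
    (G : Ω → ℝ) (hG : ∀ᵐ ω ∂P, 0 ≤ G ω)
    (εt : ℝ) (hεt : 0 < εt)
    (Bprev Bprevs Bt Bts : Ω → ℝ)
    (hBprevMeas : Measurable[mt] Bprev)
    (hBprevNonneg : ∀ᵐ ω ∂P, 0 ≤ Bprev ω)
    (hBprevLe : ∀ᵐ ω ∂P, Bprev ω ≤ G ω)
    (hBprevsMeas : Measurable[mt] Bprevs)
    (hclose : ∀ᵐ ω ∂P, |Bprevs ω - Bprev ω| ≤ εt)
    (𝒞 : Set (Ω → ℝ)) (h𝒞meas : ∀ F ∈ 𝒞, Measurable[mt] F)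
    -- `𝒞` is dense in probability among `mt`-measurable functions
    (hdense : ∀ Z : Ω → ℝ, Measurable[mt] Z → ∀ δ : ℝ, 0 < δ → ∀ η : ℝ, 0 < η →
      ∃ F ∈ 𝒞, P {ω | δ < |F ω - Z ω|} < ENNReal.ofReal η)
    (hBt : IsEssSup P
      {D : Ω → ℝ | Measurable[mt] D ∧ ∀ᵐ ω ∂P, Bprev ω ≤ D ω ∧ D ω ≤ G ω} Bt)
    (hBts : IsEssSup P
      {D : Ω → ℝ | ∃ F ∈ 𝒞, ∃ A : Set Ω, MeasurableSet[mt] A ∧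
        D = (fun ω => A.indicator F ω + Aᶜ.indicator Bprevs ω) ∧
        ∀ᵐ ω ∂P, Bprevs ω ≤ D ω ∧ D ω ≤ G ω + εt} Bts) :
    ∀ᵐ ω ∂P, |Bts ω - Bt ω| ≤ εt := by
  -- Direction 1: Bts ≤ Bt + εt a.e.
  have h1 : Bts ≤ᵐ[P] fun ω => Bt ω + εt := by
    apply hBts.2
    rintro D ⟨F, hF, A, hA, rfl, hD⟩
    have hDmeas : Measurable[mt] fun ω => A.indicator F ω + Aᶜ.indicator Bprevs ω :=
      Measurable.add ((h𝒞meas F hF).indicator hA) (hBprevsMeas.indicator hA.compl)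
    have hmem : (fun ω => max ((A.indicator F ω + Aᶜ.indicator Bprevs ω) - εt) (Bprev ω)) ∈
        {D : Ω → ℝ | Measurable[mt] D ∧ ∀ᵐ ω ∂P, Bprev ω ≤ D ω ∧ D ω ≤ G ω} := by
      refine ⟨Measurable.max (hDmeas.sub measurable_const) hBprevMeas, ?_⟩
      filter_upwards [hD, hBprevLe] with ω hω h3
      exact ⟨le_max_right _ _, max_le (by linarith [hω.2]) h3⟩
    have hub := hBt.1 _ hmem
    filter_upwards [hub] with ω hω
    have := le_trans (le_max_left _ _) hω
    linarith
  -- Direction 2: Bt ≤ Bts a.e.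
  have h2 : Bt ≤ᵐ[P] Bts := by
    apply hBt.2
    rintro D ⟨hDmeas, hD⟩
    have key : ∀ η : ℝ, 0 < η → P {ω | Bts ω < D ω} < ENNReal.ofReal η := by
      intro η hη
      obtain ⟨F, hF, hFP⟩ := hdense (fun ω => D ω + εt / 3)
        (hDmeas.add measurable_const) (εt / 3) (by positivity) η hη
      set A : Set Ω := {ω | Bprevs ω ≤ F ω} ∩ {ω | F ω ≤ D ω + εt} with hAdef
      have hAmeas : MeasurableSet[mt] A :=
        MeasurableSet.inter (measurableSet_le hBprevsMeas (h𝒞meas F hF))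
          (measurableSet_le (h𝒞meas F hF) (hDmeas.add measurable_const))
      set Ds : Ω → ℝ := fun ω => A.indicator F ω + Aᶜ.indicator Bprevs ω with hDsdef
      have hcomp : ∀ ω, (ω ∈ A → Ds ω = F ω) ∧ (ω ∉ A → Ds ω = Bprevs ω) := by
        intro ω
        constructor
        · intro hωA
          simp [hDsdef, Set.indicator_of_mem hωA,
            Set.indicator_of_notMem (by simpa using hωA : ω ∉ Aᶜ)]
        · intro hωA
          simp [hDsdef, Set.indicator_of_notMem hωA,
            Set.indicator_of_mem (by simpa using hωA : ω ∈ Aᶜ)]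
      have hmem : Ds ∈ {D : Ω → ℝ | ∃ F ∈ 𝒞, ∃ A : Set Ω, MeasurableSet[mt] A ∧
          D = (fun ω => A.indicator F ω + Aᶜ.indicator Bprevs ω) ∧
          ∀ᵐ ω ∂P, Bprevs ω ≤ D ω ∧ D ω ≤ G ω + εt} := by
        refine ⟨F, hF, A, hAmeas, rfl, ?_⟩
        filter_upwards [hD, hclose, hBprevLe] with ω hω hc hl
        by_cases hωA : ω ∈ A
        · have hx1 : Bprevs ω ≤ F ω := hωA.1
          have hx2 : F ω ≤ D ω + εt := hωA.2
          rw [(hcomp ω).1 hωA]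
          exact ⟨hx1, by linarith [hω.2]⟩
        · rw [(hcomp ω).2 hωA]
          have := abs_le.mp hc
          exact ⟨le_refl _, by linarith [this.1, this.2]⟩
      have hle : Ds ≤ᵐ[P] Bts := hBts.1 _ hmem
      have hsub : {ω | Bts ω < D ω} ⊆
          {ω | εt / 3 < |F ω - (D ω + εt / 3)|} ∪ {ω | ¬ Ds ω ≤ Bts ω} := by
        intro ω hω
        by_cases hE : εt / 3 < |F ω - (D ω + εt / 3)|
        · exact Or.inl hE
        right
        simp only [Set.mem_setOf_eq, not_le]
        push_neg at hE
        by_contra hcon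
        push_neg at hcon
        have hDsle : Ds ω ≤ Bts ω := hcon
        have habs := abs_le.mp hE
        have hFge : D ω ≤ F ω := by linarith [habs.1]
        have hFle : F ω ≤ D ω + εt := by linarith [habs.2, hεt.le]
        simp only [Set.mem_setOf_eq] at hω
        by_cases hωA : ω ∈ A
        · rw [(hcomp ω).1 hωA] at hDsle
          linarith
        · have hnB : ¬ Bprevs ω ≤ F ω := by
            intro hB
            exact hωA ⟨hB, hFle⟩
          push_neg at hnB
          rw [(hcomp ω).2 hωA] at hDsle
          linarith
      have hN : P {ω | ¬ Ds ω ≤ Bts ω} = 0 := ae_iff.mp hle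
      calc P {ω | Bts ω < D ω}
          ≤ P ({ω | εt / 3 < |F ω - (D ω + εt / 3)|} ∪ {ω | ¬ Ds ω ≤ Bts ω}) :=
            measure_mono hsub
        _ ≤ P {ω | εt / 3 < |F ω - (D ω + εt / 3)|} + P {ω | ¬ Ds ω ≤ Bts ω} :=
            measure_union_le _ _
        _ = P {ω | εt / 3 < |F ω - (D ω + εt / 3)|} := by rw [hN, add_zero]
        _ < ENNReal.ofReal η := hFP
    have hzero : P {ω | Bts ω < D ω} = 0 := by
      by_contra hne
      have hpos : 0 < P {ω | Bts ω < D ω} := pos_iff_ne_zero.mpr hne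
      have hfin : P {ω | Bts ω < D ω} ≠ ⊤ := measure_ne_top _ _
      set c := (P {ω | Bts ω < D ω}).toReal with hc
      have hcpos : 0 < c := ENNReal.toReal_pos hne hfin
      have := key (c / 2) (by positivity)
      have hlt : ENNReal.ofReal (c / 2) ≤ P {ω | Bts ω < D ω} := by
        conv_rhs => rw [← ENNReal.ofReal_toReal hfin]
        exact ENNReal.ofReal_le_ofReal (by rw [hc]; linarith)
      exact absurd (lt_of_lt_of_le this hlt) (lt_irrefl _)
    rw [Filter.EventuallyLE, ae_iff]
    simpa [not_le] using hzero
  filter_upwards [h1, h2] with ω ha hb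
  rw [abs_le]
  constructor <;> linarith
end

section
/- Let V be a nonnegative Q-supermartingale for every Q ∈ P* with V_T ≥ H, where H ≥ 0 and sup_{Q∈P*} E_Q[H] < ∞. Then V_t ≥ esssup_{Q∈P*} E_Q[H | F_t] P-a.s. for every t = 0,...,T. -/
open MeasureTheory Filter Set

theorem stmt19 {Ω : Type*} {m0 : MeasurableSpace Ω} (P : Measure Ω) [IsProbabilityMeasure P]
    (ℱ : Filtration ℕ m0) (T : ℕ)
    (𝒬 : Set (Measure Ω)) (h𝒬ne : 𝒬.Nonempty)
    (h𝒬prob : ∀ Q ∈ 𝒬, IsProbabilityMeasure Q)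
    (hequiv : ∀ Q ∈ 𝒬, Q ≪ P ∧ P ≪ Q)
    (H : Ω → ℝ) (hH : Measurable H) (hHnn : ∀ ω, 0 ≤ H ω)
    (hHint : ∀ Q ∈ 𝒬, Integrable H Q)
    (hbdd : BddAbove {r : ℝ | ∃ Q ∈ 𝒬, r = ∫ ω, H ω ∂Q})
    (V : ℕ → Ω → ℝ) (hVnn : ∀ t, ∀ᵐ ω ∂P, 0 ≤ V t ω)
    (hsuper : ∀ Q ∈ 𝒬, Supermartingale V ℱ Q)
    (hdom : ∀ᵐ ω ∂P, H ω ≤ V T ω) :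
    ∀ t, t ≤ T → ∀ Q ∈ 𝒬, (Q[H | ℱ t]) ≤ᵐ[P] V t := by
  intro t ht Q hQ
  obtain ⟨hQP, hPQ⟩ := hequiv Q hQ
  have hdomQ : ∀ᵐ ω ∂Q, H ω ≤ V T ω := hQP.ae_le hdom
  have h1 : (Q[H | ℱ t]) ≤ᵐ[Q] (Q[V T | ℱ t]) :=
    condExp_mono (hHint Q hQ) ((hsuper Q hQ).integrable T) hdomQ
  have h2 : (Q[V T | ℱ t]) ≤ᵐ[Q] V t := (hsuper Q hQ).2.1 t T ht
  exact hPQ.ae_le (h1.trans h2)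
end
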